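/- arXiv:1001.4012 — 9 statements merged into one kernel-verified Lean document; each statement's English description precedes it below -/
import Mathlib

section
/- Let X be a complete separable metric space, let μ and ν be Borel probability measures on X, and let c : X × X → [0,∞] be lower semicontinuous. Then the Kantorovich problem admits a minimizer: there exists a transport plan γ₀ ∈ Π(μ,ν) such that ∫ c dγ₀ ≤ ∫ c dγ for every γ ∈ Π(μ,ν). -/
open MeasureTheory
open Set Filter Topology TopologicalSpace
open scoped ENNReal NNReal

section OptimalTransportAux

variable {Y : Type*}

def UU (b : ℕ → Set Y) (T : Finset (Finset ℕ)) : Set Y := ⋃ t ∈ T, ⋂ i ∈ t, b i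

lemma UU_open [TopologicalSpace Y] {b : ℕ → Set Y} (hb : ∀ i, IsOpen (b i))
    (T : Finset (Finset ℕ)) : IsOpen (UU b T) :=
  isOpen_biUnion (fun t _ => isOpen_biInter_finset (fun i _ => hb i))

lemma UU_union (b : ℕ → Set Y) (T₁ T₂ : Finset (Finset ℕ)) :
    UU b (T₁ ∪ T₂) = UU b T₁ ∪ UU b T₂ := by
  ext x
  simp only [UU, mem_iUnion, exists_prop, Finset.mem_union, mem_union]
  constructor
  · rintro ⟨t, (ht | ht), hx⟩
    exacts [Or.inl ⟨t, ht, hx⟩, Or.inr ⟨t, ht, hx⟩]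
  · rintro (⟨t, ht, hx⟩ | ⟨t, ht, hx⟩)
    exacts [⟨t, Or.inl ht, hx⟩, ⟨t, Or.inr ht, hx⟩]

lemma UU_univ (b : ℕ → Set Y) : UU b {∅} = univ := by
  simp [UU]

lemma UU_inter (b : ℕ → Set Y) (T₁ T₂ : Finset (Finset ℕ)) :
    UU b T₁ ∩ UU b T₂ = UU b ((T₁ ×ˢ T₂).image fun p => p.1 ∪ p.2) := by
  ext x
  simp only [UU, mem_inter_iff, mem_iUnion, exists_prop, Finset.mem_image, Finset.mem_product]
  constructor
  · rintro ⟨⟨t₁, ht₁, hx₁⟩, ⟨t₂, ht₂, hx₂⟩⟩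
    refine ⟨t₁ ∪ t₂, ⟨⟨t₁, t₂⟩, ⟨ht₁, ht₂⟩, rfl⟩, ?_⟩
    simp only [mem_iInter, Finset.mem_union] at hx₁ hx₂ ⊢
    rintro i (hi | hi)
    exacts [hx₁ i hi, hx₂ i hi]
  · rintro ⟨t, ⟨⟨t₁, t₂⟩, ⟨ht₁, ht₂⟩, rfl⟩, hx⟩
    simp only [mem_iInter, Finset.mem_union] at hx
    exact ⟨⟨t₁, ht₁, mem_iInter₂.2 fun i hi => hx i (Or.inl hi)⟩,
      ⟨t₂, ht₂, mem_iInter₂.2 fun i hi => hx i (Or.inr hi)⟩⟩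

lemma UU_cover [TopologicalSpace Y] {b : ℕ → Set Y} (hb : ∀ i, IsOpen (b i))
    (hbasis : ∀ (x : Y) (G : Set Y), IsOpen G → x ∈ G → ∃ i, x ∈ b i ∧ b i ⊆ G)
    {K G : Set Y} (hK : IsCompact K) (hG : IsOpen G) (hKG : K ⊆ G) :
    ∃ T, K ⊆ UU b T ∧ UU b T ⊆ G := by
  classical
  set V : ℕ → Set Y := fun i => if b i ⊆ G then b i else ∅ with hV
  have hVopen : ∀ i, IsOpen (V i) := fun i => by
    by_cases h : b i ⊆ G <;> simp [hV, h, hb i, isOpen_empty]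
  have hcov : K ⊆ ⋃ i, V i := by
    intro x hx
    obtain ⟨i, hxi, hiG⟩ := hbasis x G hG (hKG hx)
    exact mem_iUnion.2 ⟨i, by simp [hV, hiG, hxi]⟩
  obtain ⟨s, hs⟩ := hK.elim_finite_subcover V hVopen hcov
  refine ⟨(s.filter (fun i => b i ⊆ G)).image (fun i => {i}), ?_, ?_⟩
  · intro x hx
    obtain ⟨i, hi, hxi⟩ := mem_iUnion₂.1 (hs hx)
    by_cases h : b i ⊆ G
    · refine mem_iUnion₂.2 ⟨{i}, ?_, ?_⟩
      · exact Finset.mem_image.2 ⟨i, Finset.mem_filter.2 ⟨hi, h⟩, rfl⟩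
      · simp only [Finset.mem_singleton, mem_iInter]
        rintro j rfl
        simpa [hV, h] using hxi
    · simp [hV, h] at hxi
  · intro x hx
    obtain ⟨t, ht, hxt⟩ := mem_iUnion₂.1 hx
    obtain ⟨i, hi, rfl⟩ := Finset.mem_image.1 ht
    have hiG : b i ⊆ G := (Finset.mem_filter.1 hi).2
    exact hiG (by simpa using mem_iInter₂.1 hxt i (Finset.mem_singleton_self i))

lemma tight_aux {Y : Type*} [MetricSpace Y] [CompleteSpace Y]
    [TopologicalSpace.SeparableSpace Y] [MeasurableSpace Y] [OpensMeasurableSpace Y]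
    (μ : Measure Y) [IsProbabilityMeasure μ] {ε : ℝ≥0∞} (hε : ε ≠ 0) :
    ∃ K : Set Y, IsCompact K ∧ μ Kᶜ ≤ ε := by
  rcases isEmpty_or_nonempty Y with hY | hY
  · exact ⟨∅, isCompact_empty, by simp [eq_empty_of_isEmpty (∅ᶜ : Set Y)]⟩
  obtain ⟨u, hu⟩ := TopologicalSpace.exists_dense_seq Y
  have hε' : min ε 1 ≠ 0 := by simp [hε, min_eq_iff]
  obtain ⟨δ, δpos, hδ⟩ := ENNReal.exists_pos_sum_of_countable hε' ℕ
  have hδ1 : ∀ n, (δ n : ℝ≥0∞) ≤ 1 := fun n =>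
    le_trans (ENNReal.le_tsum n) (hδ.le.trans (min_le_right _ _))
  have key : ∀ n : ℕ, ∃ m : ℕ,
      μ (⋃ i ∈ Finset.range m, Metric.closedBall (u i) (1/(n+1)))ᶜ ≤ δ n := by
    intro n
    have hmono : Monotone (fun m : ℕ =>
        ⋃ i ∈ Finset.range m, Metric.closedBall (u i) (1/(n+1))) := fun a b hab =>
      biUnion_subset_biUnion_left (fun i hi =>
        Finset.mem_range.2 (lt_of_lt_of_le (Finset.mem_range.1 hi) hab))
    have hlim := tendsto_measure_iUnion_atTop (μ := μ) hmono
    have huniv : (⋃ m : ℕ, ⋃ i ∈ Finset.range m, Metric.closedBall (u i) (1/(n+1))) = univ := by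
      rw [eq_univ_iff_forall]
      intro x
      obtain ⟨i, hi⟩ := hu.exists_dist_lt x (by positivity : (0:ℝ) < 1/(n+1))
      exact mem_iUnion.2 ⟨i+1, mem_biUnion (Finset.mem_range.2 (Nat.lt_succ_self i))
        (Metric.mem_closedBall.2 hi.le)⟩
    rw [huniv, measure_univ] at hlim
    have hlt : (1 : ℝ≥0∞) - δ n < 1 :=
      ENNReal.sub_lt_self ENNReal.one_ne_top one_ne_zero (by exact_mod_cast (δpos n).ne')
    obtain ⟨m, hm⟩ := (hlim.eventually (eventually_gt_nhds hlt)).exists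
    refine ⟨m, ?_⟩
    have hclosed : IsClosed (⋃ i ∈ Finset.range m, Metric.closedBall (u i) (1/(n+1))) :=
      isClosed_biUnion_finset (fun i _ => Metric.isClosed_closedBall)
    rw [prob_compl_eq_one_sub hclosed.measurableSet]
    rw [tsub_le_iff_right]
    calc (1:ℝ≥0∞) = (1 - δ n) + δ n := (tsub_add_cancel_of_le (hδ1 n)).symm
      _ ≤ _ := by rw [add_comm]; exact add_le_add_right hm.le _
  choose m hm using key
  set F : ℕ → Set Y := fun n => ⋃ i ∈ Finset.range (m n), Metric.closedBall (u i) (1/(n+1)) with hF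
  have hFclosed : ∀ n, IsClosed (F n) := fun n =>
    isClosed_biUnion_finset (fun i _ => Metric.isClosed_closedBall)
  refine ⟨⋂ n, F n, ?_, ?_⟩
  · apply TotallyBounded.isCompact_of_isClosed
    · rw [Metric.totallyBounded_iff]
      intro r hr
      obtain ⟨n, hn⟩ := exists_nat_one_div_lt hr
      refine ⟨u '' (Finset.range (m n) : Set ℕ), (Finset.finite_toSet _).image u, ?_⟩
      intro x hx
      have hxF : x ∈ F n := mem_iInter.1 hx n
      obtain ⟨i, hi, hxi⟩ := mem_iUnion₂.1 hxF
      exact mem_biUnion (mem_image_of_mem u hi)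
        (Metric.mem_ball.2 (lt_of_le_of_lt (Metric.mem_closedBall.1 hxi) hn))
    · exact isClosed_iInter hFclosed
  · have : (⋂ n, F n)ᶜ = ⋃ n, (F n)ᶜ := by simp [compl_iInter]
    rw [this]
    calc μ (⋃ n, (F n)ᶜ) ≤ ∑' n, μ (F n)ᶜ := measure_iUnion_le _
      _ ≤ ∑' n, (δ n : ℝ≥0∞) := ENNReal.tsum_le_tsum (fun n => hm n)
      _ ≤ ε := hδ.le.trans (min_le_left _ _)

lemma lint_le_liminf {Ω : Type*} [MeasurableSpace Ω] [TopologicalSpace Ω]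
    [OpensMeasurableSpace Ω] {μ : Measure Ω} {μs : ℕ → Measure Ω} {f : Ω → ℝ}
    (f_nn : 0 ≤ f)
    (f_open : ∀ t : ℝ, IsOpen {a | t < f a})
    (h_opens : ∀ G, IsOpen G → μ G ≤ atTop.liminf (fun i ↦ μs i G)) :
    ∫⁻ x, ENNReal.ofReal (f x) ∂μ ≤ atTop.liminf (fun i ↦ ∫⁻ x, ENNReal.ofReal (f x) ∂ (μs i)) := by
  have f_mble : Measurable f := by
    apply measurable_of_Ioi
    intro t
    exact (f_open t).measurableSet
  have key : ∀ (ρ : Measure Ω), ∫⁻ x, ENNReal.ofReal (f x) ∂ρ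
      = ∫⁻ t in Ioi (0:ℝ), ρ {a | t < f a} := fun ρ =>
    lintegral_eq_lintegral_meas_lt ρ (Eventually.of_forall f_nn) f_mble.aemeasurable
  simp_rw [key]
  calc  ∫⁻ (t : ℝ) in Ioi 0, μ {a | t < f a}
      ≤ ∫⁻ (t : ℝ) in Ioi 0, atTop.liminf (fun i ↦ (μs i) {a | t < f a}) := ?_
    _ ≤ atTop.liminf (fun i ↦ ∫⁻ (t : ℝ) in Ioi 0, (μs i) {a | t < f a}) := ?_
  · exact lintegral_mono (fun t ↦ h_opens _ (f_open t))
  · exact lintegral_liminf_le (fun n ↦ Antitone.measurable (fun s t hst ↦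
      measure_mono (fun ω hω ↦ lt_of_le_of_lt hst hω)))

lemma cost_le_liminf {Ω : Type*} [MeasurableSpace Ω] [TopologicalSpace Ω]
    [OpensMeasurableSpace Ω] {μ : Measure Ω} {μs : ℕ → Measure Ω} {c : Ω → ℝ≥0∞}
    (hc : LowerSemicontinuous c)
    (h_opens : ∀ G, IsOpen G → μ G ≤ atTop.liminf (fun i ↦ μs i G)) :
    ∫⁻ x, c x ∂μ ≤ atTop.liminf (fun i ↦ ∫⁻ x, c x ∂ (μs i)) := by
  have c_mble : Measurable c := hc.measurable
  set g : ℕ → Ω → ℝ≥0∞ := fun m x => min (c x) m with hg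
  have g_ne_top : ∀ m x, g m x ≠ ⊤ := fun m x =>
    ((min_le_right _ _).trans_lt (ENNReal.natCast_lt_top m)).ne
  have g_ofReal : ∀ m x, ENNReal.ofReal ((g m x).toReal) = g m x := fun m x =>
    ENNReal.ofReal_toReal (g_ne_top m x)
  have g_open : ∀ m : ℕ, ∀ t : ℝ, IsOpen {a | t < (g m a).toReal} := by
    intro m t
    rcases lt_or_ge t 0 with ht | ht
    · have : {a | t < (g m a).toReal} = univ :=
        eq_univ_of_forall (fun a => lt_of_lt_of_le ht ENNReal.toReal_nonneg)
      rw [this]; exact isOpen_univ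
    · have : {a | t < (g m a).toReal} = {a | ENNReal.ofReal t < c a} ∩ {a | ENNReal.ofReal t < (m : ℝ≥0∞)} := by
        ext a
        simp only [mem_setOf_eq, mem_inter_iff,
          ← ENNReal.ofReal_lt_iff_lt_toReal ht (g_ne_top m a), hg, lt_min_iff]
        rw [← ENNReal.ofReal_lt_iff_lt_toReal (b := min (c a) (m : ℝ≥0∞)) ht (g_ne_top m a), lt_min_iff]
      rw [this]
      apply IsOpen.inter
      · exact hc.isOpen_preimage _
      · by_cases h : ENNReal.ofReal t < (m : ℝ≥0∞) <;>
          simp [h, isOpen_univ, isOpen_empty, setOf_true, setOf_false]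
  have key : ∀ m : ℕ, ∫⁻ x, g m x ∂μ ≤ atTop.liminf (fun i ↦ ∫⁻ x, c x ∂ (μs i)) := by
    intro m
    have h1 : ∫⁻ x, g m x ∂μ = ∫⁻ x, ENNReal.ofReal ((g m x).toReal) ∂μ := by
      simp_rw [g_ofReal]
    rw [h1]
    refine (lint_le_liminf (fun x => ENNReal.toReal_nonneg) (g_open m) h_opens).trans ?_
    refine liminf_le_liminf (Eventually.of_forall (fun i => ?_))
    refine lintegral_mono (fun x => ?_)
    rw [g_ofReal]
    exact min_le_left _ _
  have gsup : ∀ x, ⨆ m : ℕ, g m x = c x := by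
    intro x
    apply le_antisymm (iSup_le fun m => min_le_left _ _)
    rcases eq_top_or_lt_top (c x) with h | h
    · have : ∀ m : ℕ, g m x = m := by
        intro m; simp [hg, h]
      calc c x ≤ ⊤ := le_top
        _ = ⨆ m : ℕ, (m : ℝ≥0∞) := ENNReal.iSup_natCast.symm
        _ = ⨆ m : ℕ, g m x := by simp_rw [this]
    · obtain ⟨m, hm⟩ := ENNReal.exists_nat_gt h.ne
      exact le_iSup_of_le m (le_min le_rfl hm.le)
  have gmono : Monotone g := by
    intro m₁ m₂ h x
    exact min_le_min le_rfl (by exact_mod_cast Nat.cast_le.2 h)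
  calc ∫⁻ x, c x ∂μ = ∫⁻ x, ⨆ m : ℕ, g m x ∂μ := by simp_rw [gsup]
    _ = ⨆ m : ℕ, ∫⁻ x, g m x ∂μ :=
        lintegral_iSup (fun m => (c_mble.min measurable_const)) (fun m₁ m₂ h => fun x => gmono h x)
    _ ≤ _ := iSup_le key

lemma exists_limit_measure [MetricSpace Y] [TopologicalSpace.SeparableSpace Y]
    [MeasurableSpace Y] [BorelSpace Y]
    (γs : ℕ → Measure Y) (hγ : ∀ n, IsProbabilityMeasure (γs n))
    (htight : ∀ ε : ℝ≥0∞, ε ≠ 0 → ∃ K : Set Y, IsCompact K ∧ ∀ n, γs n Kᶜ ≤ ε) :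
    ∃ (γ : Measure Y) (φ : ℕ → ℕ), StrictMono φ ∧ IsProbabilityMeasure γ ∧
      ∀ G : Set Y, IsOpen G → γ G ≤ atTop.liminf (fun k => γs (φ k) G) := by
  classical
  haveI : SecondCountableTopology Y := UniformSpace.secondCountable_of_separable Y
  -- countable basis
  obtain ⟨B, hBcount, -, hBbasis⟩ := exists_countable_basis Y
  obtain ⟨b, hb⟩ := ((hBcount.insert (∅ : Set Y)).exists_eq_range (insert_nonempty _ _))
  have hb_open : ∀ i, IsOpen (b i) := by
    intro i
    have : b i ∈ insert (∅ : Set Y) B := hb ▸ mem_range_self i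
    rcases this with h | h
    · rw [h]; exact isOpen_empty
    · exact hBbasis.isOpen h
  have hbasis : ∀ (x : Y) (G : Set Y), IsOpen G → x ∈ G → ∃ i, x ∈ b i ∧ b i ⊆ G := by
    intro x G hG hx
    obtain ⟨v, hvB, hxv, hvG⟩ := hBbasis.exists_subset_of_mem_open hx hG
    have : v ∈ range b := hb ▸ mem_insert_of_mem _ hvB
    obtain ⟨i, rfl⟩ := this
    exact ⟨i, hxv, hvG⟩
  -- diagonal extraction
  set A := Finset (Finset ℕ)
  set F : ℕ → (A → ℝ≥0∞) := fun n T => γs n (UU b T) with hF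
  obtain ⟨α, -, φ, hφ, hconv⟩ := (isCompact_univ (X := A → ℝ≥0∞)).tendsto_subseq
    (fun n => mem_univ (F n))
  have htend : ∀ T : A, Tendsto (fun k => γs (φ k) (UU b T)) atTop (𝓝 (α T)) := by
    intro T
    exact (tendsto_pi_nhds.1 hconv) T
  -- properties of α
  have αmono : ∀ {T₁ T₂ : A}, UU b T₁ ⊆ UU b T₂ → α T₁ ≤ α T₂ := by
    intro T₁ T₂ h
    exact le_of_tendsto_of_tendsto' (htend T₁) (htend T₂) (fun k => measure_mono h)
  have αuniv : α {∅} = 1 := by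
    have := htend {∅}
    rw [UU_univ] at this
    simp only [measure_univ] at this
    exact tendsto_nhds_unique this tendsto_const_nhds
  have αle1 : ∀ T : A, α T ≤ 1 := fun T =>
    le_of_tendsto (htend T) (Eventually.of_forall (fun k => prob_le_one))
  have αadd : ∀ {T₁ T₂ : A}, UU b T₁ ∩ UU b T₂ = ∅ → α (T₁ ∪ T₂) = α T₁ + α T₂ := by
    intro T₁ T₂ h
    have h1 : Tendsto (fun k => γs (φ k) (UU b (T₁ ∪ T₂))) atTop (𝓝 (α T₁ + α T₂)) := by
      have : ∀ k, γs (φ k) (UU b (T₁ ∪ T₂)) = γs (φ k) (UU b T₁) + γs (φ k) (UU b T₂) := by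
        intro k
        rw [UU_union]
        exact measure_union (disjoint_iff_inter_eq_empty.2 h) (UU_open hb_open T₂).measurableSet
      simp_rw [this]
      exact (htend T₁).add (htend T₂)
    exact tendsto_nhds_unique (htend _) h1
  have αsubadd : ∀ (T₁ T₂ : A), α (T₁ ∪ T₂) ≤ α T₁ + α T₂ := by
    intro T₁ T₂
    refine le_of_tendsto_of_tendsto' (htend _) ((htend T₁).add (htend T₂)) (fun k => ?_)
    rw [UU_union]
    exact measure_union_le _ _
  -- the pre-content
  set lam : Compacts Y → ℝ≥0∞ :=
    fun K => ⨅ T : {T : A // (K : Set Y) ⊆ UU b T}, α T with hlam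
  have lam_nonempty : ∀ K : Compacts Y, Nonempty {T : A // (K : Set Y) ⊆ UU b T} :=
    fun K => ⟨⟨{∅}, by rw [UU_univ]; exact subset_univ _⟩⟩
  have lam_le : ∀ (K : Compacts Y) (T : A), (K : Set Y) ⊆ UU b T → lam K ≤ α T := by
    intro K T hT
    exact iInf_le (fun T : {T : A // (K : Set Y) ⊆ UU b T} => α T) ⟨T, hT⟩
  have lam_le1 : ∀ K : Compacts Y, lam K ≤ 1 := by
    intro K
    refine (lam_le K {∅} ?_).trans (le_of_eq αuniv)
    rw [UU_univ]; exact subset_univ _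
  have lam_ne_top : ∀ K, lam K ≠ ⊤ := fun K => ((lam_le1 K).trans_lt ENNReal.one_lt_top).ne
  have lam_mono : ∀ K₁ K₂ : Compacts Y, (K₁ : Set Y) ⊆ K₂ → lam K₁ ≤ lam K₂ := by
    intro K₁ K₂ h
    haveI := lam_nonempty K₂
    refine le_iInf (fun T => ?_)
    exact lam_le K₁ T (h.trans T.2)
  have lam_sup_le : ∀ K₁ K₂ : Compacts Y, lam (K₁ ⊔ K₂) ≤ lam K₁ + lam K₂ := by
    intro K₁ K₂
    rw [hlam]
    simp only
    rw [ENNReal.iInf_add]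
    refine le_iInf (fun T₁ => ?_)
    rw [ENNReal.add_iInf]
    refine le_iInf (fun T₂ => ?_)
    refine le_trans (lam_le (K₁ ⊔ K₂) (T₁.1 ∪ T₂.1) ?_) (αsubadd T₁.1 T₂.1)
    rw [UU_union]
    exact union_subset (T₁.2.trans subset_union_left) (T₂.2.trans subset_union_right)
  have lam_sup_eq : ∀ K₁ K₂ : Compacts Y, Disjoint (K₁ : Set Y) (K₂ : Set Y) →
      lam (K₁ ⊔ K₂) = lam K₁ + lam K₂ := by
    intro K₁ K₂ hdis
    refine le_antisymm (lam_sup_le K₁ K₂) ?_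
    obtain ⟨V₁, V₂, hV₁, hV₂, hKV₁, hKV₂, hVdis⟩ :=
      SeparatedNhds.of_isCompact_isCompact K₁.isCompact K₂.isCompact hdis
    obtain ⟨S₁, hKS₁, hSV₁⟩ := UU_cover hb_open hbasis K₁.isCompact hV₁ hKV₁
    obtain ⟨S₂, hKS₂, hSV₂⟩ := UU_cover hb_open hbasis K₂.isCompact hV₂ hKV₂
    haveI := lam_nonempty (K₁ ⊔ K₂)
    refine le_iInf (fun T => ?_)
    set E₁ : A := ((T.1 ×ˢ S₁).image fun p => p.1 ∪ p.2) with hE₁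
    set E₂ : A := ((T.1 ×ˢ S₂).image fun p => p.1 ∪ p.2) with hE₂
    have hUE₁ : UU b E₁ = UU b T.1 ∩ UU b S₁ := (UU_inter b T.1 S₁).symm
    have hUE₂ : UU b E₂ = UU b T.1 ∩ UU b S₂ := (UU_inter b T.1 S₂).symm
    have hsub : (K₁ : Set Y) ∪ (K₂ : Set Y) ⊆ UU b T.1 := by
      intro x hx
      exact T.2 (by rwa [Compacts.coe_sup])
    have hK₁E : (K₁ : Set Y) ⊆ UU b E₁ := by
      rw [hUE₁]
      exact subset_inter (subset_union_left.trans hsub) hKS₁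
    have hK₂E : (K₂ : Set Y) ⊆ UU b E₂ := by
      rw [hUE₂]
      exact subset_inter (subset_union_right.trans hsub) hKS₂
    have hdisE : UU b E₁ ∩ UU b E₂ = ∅ := by
      rw [hUE₁, hUE₂]
      rw [← subset_empty_iff]
      intro x hx
      exact absurd (mem_inter (hSV₁ hx.1.2) (hSV₂ hx.2.2))
        (by simpa [disjoint_iff_inter_eq_empty.1 hVdis] using id)
    calc lam K₁ + lam K₂ ≤ α E₁ + α E₂ :=
          add_le_add (lam_le K₁ E₁ hK₁E) (lam_le K₂ E₂ hK₂E)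
      _ = α (E₁ ∪ E₂) := (αadd hdisE).symm
      _ ≤ α T.1 := by
          refine αmono ?_
          rw [UU_union, hUE₁, hUE₂]
          exact union_subset inter_subset_left inter_subset_left
  -- build the content
  set C : Content Y :=
    { toFun := fun K => (lam K).toNNReal
      mono' := fun K₁ K₂ h => ENNReal.toNNReal_mono (lam_ne_top K₂) (lam_mono K₁ K₂ h)
      sup_disjoint' := fun K₁ K₂ hdis _ _ => by
        show (lam (K₁ ⊔ K₂)).toNNReal = (lam K₁).toNNReal + (lam K₂).toNNReal
        rw [lam_sup_eq K₁ K₂ hdis, ENNReal.toNNReal_add (lam_ne_top K₁) (lam_ne_top K₂)]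
      sup_le' := fun K₁ K₂ => by
        rw [← ENNReal.toNNReal_add (lam_ne_top K₁) (lam_ne_top K₂)]
        exact ENNReal.toNNReal_mono (by
          exact (ENNReal.add_ne_top).2 ⟨lam_ne_top K₁, lam_ne_top K₂⟩) (lam_sup_le K₁ K₂) } with hC
  have hCcoe : ∀ K : Compacts Y, (C K : ℝ≥0∞) = lam K := by
    intro K
    simp only [hC, Content.mk_apply]
    exact ENNReal.coe_toNNReal (lam_ne_top K)
  set γ : Measure Y := C.measure with hγdef
  have hopen_eval : ∀ (G : Set Y) (hG : IsOpen G),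
      γ G = ⨆ (K : Compacts Y) (_ : (K : Set Y) ⊆ G), lam K := by
    intro G hG
    rw [hγdef, C.measure_apply hG.measurableSet, C.outerMeasure_of_isOpen G hG]
    show C.innerContent ⟨G, hG⟩ = _
    rw [Content.innerContent]
    congr 1
    ext K
    congr 1
    ext hKG
    exact hCcoe K
  have P1 : ∀ G : Set Y, IsOpen G → γ G ≤ atTop.liminf (fun k => γs (φ k) G) := by
    intro G hG
    rw [hopen_eval G hG]
    refine iSup₂_le (fun K hKG => ?_)
    obtain ⟨T, hKT, hTG⟩ := UU_cover hb_open hbasis K.isCompact hG hKG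
    refine (lam_le K T hKT).trans ?_
    have : α T = atTop.liminf (fun k => γs (φ k) (UU b T)) := (htend T).liminf_eq.symm
    rw [this]
    exact liminf_le_liminf (Eventually.of_forall (fun k => measure_mono hTG))
  have Puniv : γ univ = 1 := by
    rw [hopen_eval univ isOpen_univ]
    apply le_antisymm
    · exact iSup₂_le (fun K _ => lam_le1 K)
    · refine ENNReal.le_of_forall_pos_le_add (fun ε hε hlt => ?_)
      obtain ⟨K, hKcomp, hKb⟩ := htight ε (by exact_mod_cast hε.ne')
      have hlamK : (1 : ℝ≥0∞) - ε ≤ lam ⟨K, hKcomp⟩ := by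
        haveI := lam_nonempty ⟨K, hKcomp⟩
        refine le_iInf (fun T => ?_)
        refine ge_of_tendsto (htend T.1) (Eventually.of_forall (fun k => ?_))
        have h1 : (1:ℝ≥0∞) ≤ γs (φ k) K + ε := by
          calc (1:ℝ≥0∞) = γs (φ k) univ := (measure_univ).symm
            _ ≤ γs (φ k) K + γs (φ k) Kᶜ := by
                rw [← union_compl_self K] ; exact measure_union_le _ _
            _ ≤ γs (φ k) K + ε := add_le_add_right (hKb (φ k)) _
        calc (1:ℝ≥0∞) - ε ≤ γs (φ k) K := tsub_le_iff_right.2 h1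
          _ ≤ γs (φ k) (UU b T.1) := measure_mono T.2
      calc (1:ℝ≥0∞) ≤ (1 - ε) + ε := le_tsub_add
        _ ≤ (⨆ (K : Compacts Y) (_ : (K : Set Y) ⊆ univ), lam K) + ε := by
            refine add_le_add_left ?_ _
            exact hlamK.trans (le_iSup₂_of_le ⟨K, hKcomp⟩ (subset_univ _) le_rfl)
  exact ⟨γ, φ, hφ, ⟨Puniv⟩, P1⟩

lemma eq_of_le_open {Z : Type*} [MetricSpace Z] [MeasurableSpace Z] [BorelSpace Z]
    (κ μ' : Measure Z) [IsProbabilityMeasure κ] [IsProbabilityMeasure μ']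
    (h : ∀ G : Set Z, IsOpen G → κ G ≤ μ' G) : κ = μ' := by
  have hclosed : ∀ F : Set Z, IsClosed F → μ' F ≤ κ F := by
    intro F hF
    have h1 : κ F = 1 - κ Fᶜ := by
      rw [← prob_compl_eq_one_sub hF.measurableSet.compl, compl_compl]
    have h2 : μ' F = 1 - μ' Fᶜ := by
      rw [← prob_compl_eq_one_sub hF.measurableSet.compl, compl_compl]
    rw [h1, h2]
    exact tsub_le_tsub_left (h Fᶜ hF.isOpen_compl) 1
  have hopen : ∀ G : Set Z, IsOpen G → κ G = μ' G := by
    intro G hG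
    refine le_antisymm (h G hG) ?_
    by_contra hcon
    push_neg at hcon
    obtain ⟨F, hFG, hFclosed, hFlt⟩ :=
      (MeasureTheory.Measure.WeaklyRegular.innerRegular (μ := μ')) hG (κ G) hcon
    exact absurd ((hclosed F hFclosed).trans (measure_mono hFG)) (not_le.2 hFlt)
  refine MeasureTheory.ext_of_generate_finite {s : Set Z | IsOpen s} ?_ ?_ ?_ ?_
  · rw [BorelSpace.measurable_eq (α := Z)]; rfl
  · exact fun s hs t ht _ => hs.inter ht
  · exact fun s hs => hopen s hs
  · simp

end OptimalTransportAux

theorem stmt_0 {X : Type*} [MetricSpace X] [CompleteSpace X]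
    [TopologicalSpace.SeparableSpace X] [MeasurableSpace X] [BorelSpace X]
    (μ ν : Measure X) [IsProbabilityMeasure μ] [IsProbabilityMeasure ν]
    (c : X × X → ENNReal) (hc : LowerSemicontinuous c) :
    ∃ γ₀ : Measure (X × X), IsProbabilityMeasure γ₀ ∧
      γ₀.map Prod.fst = μ ∧ γ₀.map Prod.snd = ν ∧
      ∀ γ : Measure (X × X), IsProbabilityMeasure γ →
        γ.map Prod.fst = μ → γ.map Prod.snd = ν →
        ∫⁻ p, c p ∂γ₀ ≤ ∫⁻ p, c p ∂γ := by
  classical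
  haveI : SecondCountableTopology X := UniformSpace.secondCountable_of_separable X
  set Pl := {γ : Measure (X × X) // IsProbabilityMeasure γ ∧
      γ.map Prod.fst = μ ∧ γ.map Prod.snd = ν} with hPl
  have hprod : IsProbabilityMeasure (μ.prod ν) ∧
      (μ.prod ν).map Prod.fst = μ ∧ (μ.prod ν).map Prod.snd = ν := by
    refine ⟨inferInstance, ?_, ?_⟩
    · rw [Measure.map_fst_prod, measure_univ, one_smul]
    · rw [Measure.map_snd_prod, measure_univ, one_smul]
  set I := ⨅ γ : Pl, ∫⁻ p, c p ∂(γ : Measure (X × X)) with hI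
  have hIle : ∀ γ : Measure (X × X), IsProbabilityMeasure γ →
      γ.map Prod.fst = μ → γ.map Prod.snd = ν → I ≤ ∫⁻ p, c p ∂γ := by
    intro γ h1 h2 h3
    exact iInf_le (fun γ : Pl => ∫⁻ p, c p ∂(γ : Measure (X × X))) ⟨γ, h1, h2, h3⟩
  rcases eq_top_or_lt_top I with hItop | hIlt
  · refine ⟨μ.prod ν, hprod.1, hprod.2.1, hprod.2.2, ?_⟩
    intro γ h1 h2 h3
    have : ∫⁻ p, c p ∂γ = ⊤ := top_le_iff.1 (hItop ▸ hIle γ h1 h2 h3)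
    rw [this]; exact le_top
  -- minimizing sequence
  have hseq : ∀ n : ℕ, ∃ γ : Pl, ∫⁻ p, c p ∂(γ : Measure (X × X)) ≤ I + 1/(n+1) := by
    intro n
    have hlt : I < I + 1/(n+1) := ENNReal.lt_add_right hIlt.ne (by
      simp [ENNReal.div_eq_top])
    obtain ⟨γ, hγ⟩ := iInf_lt_iff.1 (lt_of_le_of_lt (le_refl I) hlt)
    exact ⟨γ, hγ.le⟩
  choose seq hseqle using hseq
  set γs : ℕ → Measure (X × X) := fun n => (seq n : Measure (X × X)) with hγs
  have hγsp : ∀ n, IsProbabilityMeasure (γs n) := fun n => (seq n).2.1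
  have hγsf : ∀ n, (γs n).map Prod.fst = μ := fun n => (seq n).2.2.1
  have hγss : ∀ n, (γs n).map Prod.snd = ν := fun n => (seq n).2.2.2
  -- tightness
  have htight : ∀ ε : ℝ≥0∞, ε ≠ 0 → ∃ K : Set (X × X), IsCompact K ∧ ∀ n, γs n Kᶜ ≤ ε := by
    intro ε hε
    have hε2 : ε/2 ≠ 0 := by simp [hε]
    obtain ⟨K₁, hK₁, hK₁m⟩ := tight_aux μ hε2
    obtain ⟨K₂, hK₂, hK₂m⟩ := tight_aux ν hε2
    refine ⟨K₁ ×ˢ K₂, hK₁.prod hK₂, fun n => ?_⟩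
    have hsub : (K₁ ×ˢ K₂)ᶜ ⊆ (Prod.fst ⁻¹' K₁ᶜ) ∪ (Prod.snd ⁻¹' K₂ᶜ) := by
      intro x hx
      rcases not_and_or.1 (fun hmem => hx (mem_prod.2 hmem)) with h | h
      exacts [Or.inl h, Or.inr h]
    have h1 : γs n (Prod.fst ⁻¹' K₁ᶜ) = μ K₁ᶜ := by
      rw [← hγsf n, Measure.map_apply measurable_fst hK₁.isClosed.measurableSet.compl]
    have h2 : γs n (Prod.snd ⁻¹' K₂ᶜ) = ν K₂ᶜ := by
      rw [← hγss n, Measure.map_apply measurable_snd hK₂.isClosed.measurableSet.compl]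
    calc γs n (K₁ ×ˢ K₂)ᶜ ≤ γs n ((Prod.fst ⁻¹' K₁ᶜ) ∪ (Prod.snd ⁻¹' K₂ᶜ)) :=
          measure_mono hsub
      _ ≤ γs n (Prod.fst ⁻¹' K₁ᶜ) + γs n (Prod.snd ⁻¹' K₂ᶜ) := measure_union_le _ _
      _ = μ K₁ᶜ + ν K₂ᶜ := by rw [h1, h2]
      _ ≤ ε/2 + ε/2 := add_le_add hK₁m hK₂m
      _ = ε := ENNReal.add_halves ε
  obtain ⟨γ₀, φ, hφ, hγ₀p, hγ₀open⟩ := exists_limit_measure γs hγsp htight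
  -- marginals
  haveI : IsProbabilityMeasure γ₀ := hγ₀p
  have hfst : γ₀.map Prod.fst = μ := by
    haveI : IsProbabilityMeasure (γ₀.map Prod.fst) :=
      Measure.isProbabilityMeasure_map measurable_fst.aemeasurable
    refine eq_of_le_open _ _ (fun G hG => ?_)
    rw [Measure.map_apply measurable_fst hG.measurableSet]
    refine (hγ₀open _ (hG.preimage continuous_fst)).trans ?_
    have : ∀ k, γs (φ k) (Prod.fst ⁻¹' G) = μ G := by
      intro k
      rw [← hγsf (φ k), Measure.map_apply measurable_fst hG.measurableSet]
    simp_rw [this]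
    rw [liminf_const]
  have hsnd : γ₀.map Prod.snd = ν := by
    haveI : IsProbabilityMeasure (γ₀.map Prod.snd) :=
      Measure.isProbabilityMeasure_map measurable_snd.aemeasurable
    refine eq_of_le_open _ _ (fun G hG => ?_)
    rw [Measure.map_apply measurable_snd hG.measurableSet]
    refine (hγ₀open _ (hG.preimage continuous_snd)).trans ?_
    have : ∀ k, γs (φ k) (Prod.snd ⁻¹' G) = ν G := by
      intro k
      rw [← hγss (φ k), Measure.map_apply measurable_snd hG.measurableSet]
    simp_rw [this]
    rw [liminf_const]
  -- cost bound
  have hcost : ∫⁻ p, c p ∂γ₀ ≤ I := by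
    refine (cost_le_liminf hc hγ₀open).trans ?_
    have hbd : ∀ k : ℕ, ∫⁻ p, c p ∂(γs (φ k)) ≤ I + 1/(k+1) := by
      intro k
      refine (hseqle (φ k)).trans (add_le_add_right ?_ I)
      gcongr
      exact hφ.le_apply
    have hlim : Tendsto (fun k : ℕ => I + 1/(k+1)) atTop (𝓝 I) := by
      have h0 : Tendsto (fun k : ℕ => 1/((k:ℝ≥0∞)+1)) atTop (𝓝 0) := by
        simp_rw [one_div]
        have := ENNReal.tendsto_inv_nat_nhds_zero.comp (tendsto_add_atTop_nat 1)
        refine this.congr (fun k => ?_)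
        simp only [Function.comp_apply]
        push_cast
        rfl
      have := Tendsto.const_add I h0
      simpa using this
    calc atTop.liminf (fun k => ∫⁻ p, c p ∂(γs (φ k)))
        ≤ atTop.liminf (fun k : ℕ => I + 1/(k+1)) :=
          liminf_le_liminf (Eventually.of_forall hbd)
      _ = I := hlim.liminf_eq
  refine ⟨γ₀, hγ₀p, hfst, hsnd, fun γ h1 h2 h3 => hcost.trans (hIle γ h1 h2 h3)⟩
end

section
/- Let (X,d) be a geodesic and non-branching metric space. Let x, y, x', y' ∈ X with x ≠ y and x ≠ x', assume there are a constant-speed minimal curve σ : [0,1] → X with σ(0) = x, σ(1) = y and a parameter r ∈ (0,1] with σ(r) = x' (x' lies on a minimal curve from x to y), and assume d(x,y) + d(x',y') ≤ d(x,y') + d(x',y). Then all four points lie on one minimal curve: there exist a constant-speed minimal curve τ : [0,1] → X and reals s, t, t' with 0 < s ≤ t ≤ 1 and s ≤ t' ≤ 1 such that τ(0) = x, τ(s) = x', τ(t) = y and τ(t') = y'. -/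
/-- A constant-speed minimal curve parameterized on `[0,1]`. -/
def IsMinCurve {X : Type*} [MetricSpace X] (σ : ℝ → X) : Prop :=
  ∀ s s' : ℝ, 0 ≤ s → s ≤ s' → s' ≤ 1 →
    dist (σ s) (σ s') = (s' - s) * dist (σ 0) (σ 1)

/-- A metric space is geodesic if any two points are joined by a
constant-speed minimal curve. -/
def IsGeodesicSpace (X : Type*) [MetricSpace X] : Prop :=
  ∀ x y : X, ∃ σ : ℝ → X, IsMinCurve σ ∧ σ 0 = x ∧ σ 1 = y

/-- A metric space is non-branching if any two constant-speed minimal curves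
parameterized on `[0,1]` which coincide on a nondegenerate subinterval of
`[0,1]` coincide on all of `[0,1]`. -/
def IsNonBranching (X : Type*) [MetricSpace X] : Prop :=
  ∀ σ τ : ℝ → X, IsMinCurve σ → IsMinCurve τ →
    ∀ a b : ℝ, 0 ≤ a → a < b → b ≤ 1 → (∀ s ∈ Set.Icc a b, σ s = τ s) →
      ∀ s ∈ Set.Icc (0 : ℝ) 1, σ s = τ s

lemma minCurve_scale {X : Type*} [MetricSpace X] {τ : ℝ → X} (hτ : IsMinCurve τ)
    {c : ℝ} (hc0 : 0 ≤ c) (hc1 : c ≤ 1) : IsMinCurve (fun v => τ (v * c)) := by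
  intro u v hu huv hv
  simp only
  have h01 : dist (τ (0 * c)) (τ (1 * c)) = (1 * c - 0 * c) * dist (τ 0) (τ 1) :=
    hτ _ _ (by nlinarith) (by nlinarith) (by nlinarith)
  have h := hτ (u * c) (v * c) (by positivity) (by nlinarith) (by nlinarith)
  rw [h, h01]; ring

set_option maxHeartbeats 1000000 in
theorem stmt_4 {X : Type*} [MetricSpace X]
    (hgeo : IsGeodesicSpace X) (hnb : IsNonBranching X)
    (x y x' y' : X) (hxy : x ≠ y) (hxx' : x ≠ x')
    (σ : ℝ → X) (hσ : IsMinCurve σ) (hσ0 : σ 0 = x) (hσ1 : σ 1 = y)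
    (r : ℝ) (hr : r ∈ Set.Ioc (0 : ℝ) 1) (hσr : σ r = x')
    (hmono : dist x y + dist x' y' ≤ dist x y' + dist x' y) :
    ∃ (τ : ℝ → X) (s t t' : ℝ), IsMinCurve τ ∧
      0 < s ∧ s ≤ t ∧ t ≤ 1 ∧ s ≤ t' ∧ t' ≤ 1 ∧
      τ 0 = x ∧ τ s = x' ∧ τ t = y ∧ τ t' = y' := by
  obtain ⟨hr0, hr1⟩ := hr
  have hD : 0 < dist x y := dist_pos.2 hxy
  have h1 : dist x x' = r * dist x y := by
    have := hσ 0 r le_rfl hr0.le hr1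
    rw [hσ0, hσr, hσ1] at this; simpa using this
  have h2 : dist x' y = (1 - r) * dist x y := by
    have := hσ r 1 hr0.le hr1 le_rfl
    rw [hσ0, hσr, hσ1] at this; exact this
  have hsum : dist x x' + dist x' y = dist x y := by rw [h1, h2]; ring
  have key : dist x y' = dist x x' + dist x' y' :=
    le_antisymm (dist_triangle x x' y') (by linarith)
  have hdxx' : 0 < dist x x' := dist_pos.2 hxx'
  by_cases hx'y' : x' = y'
  · exact ⟨σ, r, 1, r, hσ, hr0, hr1, le_rfl, le_rfl, hr1, hσ0, hσr, hσ1, by rw [hσr, hx'y']⟩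
  have hdx'y' : 0 < dist x' y' := dist_pos.2 hx'y'
  have hD' : 0 < dist x y' := by linarith
  set s : ℝ := dist x x' / dist x y' with hs_def
  have hs0 : 0 < s := div_pos hdxx' hD'
  have hs1 : s < 1 := (div_lt_one hD').2 (by linarith)
  have hsD' : s * dist x y' = dist x x' := div_mul_cancel₀ _ hD'.ne'
  have hrsD : r / s * dist x y = dist x y' := by
    field_simp
    nlinarith [hsD', h1]
  have hrs2 : r / s = dist x y' / dist x y := by
    rw [eq_div_iff hD.ne']; exact hrsD
  obtain ⟨γ, hγ, hγ0, hγ1⟩ := hgeo x' y'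
  have hγ01 : dist (γ 0) (γ 1) = dist x' y' := by rw [hγ0, hγ1]
  have hx'y'eq : dist x' y' = (1 - s) * dist x y' := by nlinarith [hsD']
  set τ : ℝ → X := fun u => if u ≤ s then σ (u * (r / s)) else γ ((u - s) / (1 - s)) with hτ_def
  have hτσ : ∀ u, u ≤ s → τ u = σ (u * (r / s)) := fun u hu => if_pos hu
  have hsrs : s * (r / s) = r := by field_simp
  have hτγ : ∀ u, s ≤ u → τ u = γ ((u - s) / (1 - s)) := by
    intro u hu
    by_cases h : u ≤ s
    · have he : u = s := le_antisymm h hu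
      rw [he, hτσ s le_rfl, hsrs, hσr]
      simp [hγ0]
    · exact if_neg h
  have hτ0 : τ 0 = x := by rw [hτσ 0 hs0.le]; simpa using hσ0
  have hτs : τ s = x' := by rw [hτσ s le_rfl, hsrs, hσr]
  have hτ1 : τ 1 = y' := by
    rw [hτγ 1 hs1.le, div_self (by linarith : (1:ℝ) - s ≠ 0), hγ1]
  have hL : ∀ u v, 0 ≤ u → u ≤ v → v ≤ s → dist (τ u) (τ v) = (v - u) * dist x y' := by
    intro u v hu huv hv
    rw [hτσ u (le_trans huv hv), hτσ v hv]
    have hrs0 : 0 ≤ r / s := by positivity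
    have h := hσ (u * (r / s)) (v * (r / s)) (by positivity)
      (by nlinarith) (by nlinarith [hsrs, hr1])
    rw [hσ0, hσ1] at h
    rw [h]; nlinarith [hrsD]
  have hR : ∀ u v, s ≤ u → u ≤ v → v ≤ 1 → dist (τ u) (τ v) = (v - u) * dist x y' := by
    intro u v hu huv hv
    rw [hτγ u hu, hτγ v (le_trans hu huv)]
    have h1s : (0:ℝ) < 1 - s := by linarith
    have h := hγ ((u - s) / (1 - s)) ((v - s) / (1 - s))
      (div_nonneg (by linarith) (by linarith)) ((div_le_div_iff_of_pos_right h1s).2 (by linarith))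
      (by rw [div_le_one h1s]; linarith)
    rw [hγ01, hx'y'eq] at h
    rw [h]
    field_simp
    ring
  have hτmin : IsMinCurve τ := by
    intro u v hu huv hv
    rw [hτ0, hτ1]
    by_cases hvs : v ≤ s
    · rw [hL u v hu huv hvs]
    · by_cases hus : s ≤ u
      · rw [hR u v hus huv hv]
      · push_neg at hvs hus
        have e1 := hL u s hu hus.le le_rfl
        have e2 := hR s v le_rfl hvs.le hv
        have e3 := hL 0 u le_rfl hu hus.le
        have e4 := hR v 1 hvs.le hv le_rfl
        have t1 := dist_triangle (τ u) (τ s) (τ v)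
        have t2 := dist_triangle (τ 0) (τ u) (τ v)
        have t3 := dist_triangle (τ 0) (τ v) (τ 1)
        have e5 : dist (τ 0) (τ 1) = dist x y' := by rw [hτ0, hτ1]
        linarith
  rcases le_total (dist x y') (dist x y) with hc | hc
  · -- y' lies on σ
    have hc0 : (0:ℝ) ≤ dist x y' / dist x y := by positivity
    have hc1 : dist x y' / dist x y ≤ 1 := (div_le_one hD).2 hc
    have hσhat := minCurve_scale hσ hc0 hc1
    have hagree : ∀ v ∈ Set.Icc (0:ℝ) s,
        τ v = (fun v => σ (v * (dist x y' / dist x y))) v := by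
      intro v hv
      simp only
      rw [hτσ v hv.2, hrs2]
    have hall := hnb τ _ hτmin hσhat 0 s le_rfl hs0 hs1.le hagree
    have hy' : σ (dist x y' / dist x y) = y' := by
      have h := hall 1 ⟨zero_le_one, le_rfl⟩
      simp only [one_mul] at h
      rw [← h]; exact hτ1
    refine ⟨σ, r, 1, dist x y' / dist x y, hσ, hr0, hr1, le_rfl, ?_, hc1,
      hσ0, hσr, hσ1, hy'⟩
    rw [le_div_iff₀ hD]
    linarith
  · -- y lies on τ
    have hc0 : (0:ℝ) ≤ dist x y / dist x y' := by positivity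
    have hc1 : dist x y / dist x y' ≤ 1 := (div_le_one hD').2 hc
    have hτhat := minCurve_scale hτmin hc0 hc1
    have hagree : ∀ v ∈ Set.Icc (0:ℝ) r,
        σ v = (fun v => τ (v * (dist x y / dist x y'))) v := by
      intro v hv
      simp only
      have hvc : v * (dist x y / dist x y') ≤ s := by
        have := mul_le_mul_of_nonneg_right hv.2 hc0
        have hrc : r * (dist x y / dist x y') = s := by
          rw [hs_def]
          field_simp
          linarith
        linarith
      rw [hτσ _ hvc, hrs2]
      congr 1
      field_simp
    have hall := hnb σ _ hσ hτhat 0 r le_rfl hr0 hr1 hagree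
    have hy : τ (dist x y / dist x y') = y := by
      have h := hall 1 ⟨zero_le_one, le_rfl⟩
      simp only [one_mul] at h
      rw [← h]; exact hσ1
    refine ⟨τ, s, dist x y / dist x y', 1, hτmin, hs0, ?_, hc1, hs1.le, le_rfl,
      hτ0, hτs, hy, hτ1⟩
    rw [hs_def]
    exact (div_le_div_iff_of_pos_right hD').2
      (by linarith [hsum, dist_nonneg (x := x') (y := y)])
end

section
/- Let (X,d) be a geodesic and non-branching metric space and u : X → ℝ a 1-Lipschitz function. Let x, y, x', y' ∈ X with x ≠ y and x ≠ x'. Assume u(x) − u(y) = d(x,y) and u(x') − u(y') = d(x',y'); assume there are a constant-speed minimal curve σ : [0,1] → X with σ(0) = x, σ(1) = y and a parameter r ∈ (0,1] with σ(r) = x' (x' lies on a minimal curve from x to y); and assume the monotonicity inequality d(x,y)² + d(x',y')² ≤ d(x,y')² + d(x',y)². Then the four points lie, in the order x, x', y, y', on one minimal curve: there exist a constant-speed minimal curve τ : [0,1] → X and reals s, t, t' with 0 < s ≤ t ≤ t' ≤ 1 such that τ(0) = x, τ(s) = x', τ(t) = y and τ(t') = y'. -/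
theorem stmt_7 {X : Type*} [MetricSpace X]
    (hgeo : IsGeodesicSpace X) (hnb : IsNonBranching X)
    (u : X → ℝ) (hu : LipschitzWith 1 u)
    (x y x' y' : X) (hxy : x ≠ y) (hxx' : x ≠ x')
    (h1 : u x - u y = dist x y) (h2 : u x' - u y' = dist x' y')
    (σ : ℝ → X) (hσ : IsMinCurve σ) (hσ0 : σ 0 = x) (hσ1 : σ 1 = y)
    (r : ℝ) (hr : r ∈ Set.Ioc (0 : ℝ) 1) (hσr : σ r = x')
    (hmono : dist x y ^ 2 + dist x' y' ^ 2 ≤ dist x y' ^ 2 + dist x' y ^ 2) :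
    ∃ (τ : ℝ → X) (s t t' : ℝ), IsMinCurve τ ∧
      0 < s ∧ s ≤ t ∧ t ≤ t' ∧ t' ≤ 1 ∧
      τ 0 = x ∧ τ s = x' ∧ τ t = y ∧ τ t' = y' := by
  classical
  obtain ⟨hr0, hr1⟩ := hr
  have lip : ∀ p q : X, u p - u q ≤ dist p q := by
    intro p q
    have h := hu.dist_le_mul p q
    rw [NNReal.coe_one, one_mul, Real.dist_eq] at h
    calc u p - u q ≤ |u p - u q| := le_abs_self _
      _ ≤ dist p q := h
  have hDpos : 0 < dist x y := dist_pos.mpr hxy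
  have hapos : 0 < dist x x' := dist_pos.mpr hxx'
  have hxx'd : dist x x' = r * dist x y := by
    have := hσ 0 r le_rfl hr0.le hr1
    simpa [hσ0, hσ1, hσr] using this
  have hx'yd : dist x' y = (1 - r) * dist x y := by
    have := hσ r 1 hr0.le hr1 le_rfl
    simpa [hσ0, hσ1, hσr] using this
  -- u is exact between x, x' and x', y
  have l1 := lip x x'
  have l2 := lip x' y
  have hux' : u x - u x' = dist x x' := by nlinarith
  -- dist x y' splits at x'
  have hxy' : dist x y' = dist x x' + dist x' y' := by
    have l3 := lip x y'
    have htri := dist_triangle x x' y'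
    linarith
  -- monotonicity gives dist x' y ≤ dist x' y'
  have hbc : dist x' y ≤ dist x' y' := by
    nlinarith [hxx'd, hx'yd, hapos]
  have hsplit : dist x x' + dist x' y = dist x y := by
    rw [hxx'd, hx'yd]; ring
  have hDle : dist x y ≤ dist x x' + dist x' y' := by linarith
  have haD : dist x x' ≤ dist x y := by nlinarith [dist_nonneg (x := x') (y := y)]
  obtain ⟨η, hη, hη0, hη1⟩ := hgeo x' y'
  -- u along σ
  have huσ : ∀ s, 0 ≤ s → s ≤ 1 → u (σ s) = u x - s * dist x y := by
    intro s hs hs1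
    have e1 : dist x (σ s) = s * dist x y := by
      have := hσ 0 s le_rfl hs hs1; rw [hσ0, hσ1] at this; linarith
    have e2 : dist (σ s) y = (1 - s) * dist x y := by
      have := hσ s 1 hs hs1 le_rfl; rw [hσ0, hσ1] at this; linarith
    have m1 := lip x (σ s)
    have m2 := lip (σ s) y
    rw [e1] at m1; rw [e2] at m2
    linarith
  -- u along η
  have huη : ∀ s, 0 ≤ s → s ≤ 1 → u (η s) = u x' - s * dist x' y' := by
    intro s hs hs1
    have e1 : dist x' (η s) = s * dist x' y' := by
      have := hη 0 s le_rfl hs hs1; rw [hη0, hη1] at this; linarith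
    have e2 : dist (η s) y' = (1 - s) * dist x' y' := by
      have := hη s 1 hs hs1 le_rfl; rw [hη0, hη1] at this; linarith
    have m1 := lip x' (η s)
    have m2 := lip (η s) y'
    rw [e1] at m1; rw [e2] at m2
    linarith
  -- abstract the distances
  obtain ⟨D, hD⟩ : ∃ D, dist x y = D := ⟨_, rfl⟩
  obtain ⟨a, ha⟩ : ∃ a, dist x x' = a := ⟨_, rfl⟩
  obtain ⟨c, hc⟩ : ∃ c, dist x' y' = c := ⟨_, rfl⟩
  have hcnn : 0 ≤ c := hc ▸ dist_nonneg
  rw [hD] at hDpos hxx'd haD hDle huσ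
  rw [ha] at hapos hxx'd hux' hxy' haD hDle
  rw [hc] at hxy' hDle huη
  obtain ⟨L, hL⟩ : ∃ L, a + c = L := ⟨_, rfl⟩
  rw [hL] at hxy' hDle
  have hLpos : 0 < L := by linarith
  obtain ⟨s₀, hs₀⟩ : ∃ s, a / L = s := ⟨_, rfl⟩
  have hs₀pos : 0 < s₀ := by rw [← hs₀]; exact div_pos hapos hLpos
  have hs₀le : s₀ ≤ 1 := by rw [← hs₀, div_le_one hLpos]; linarith
  have hs₀L : s₀ * L = a := by rw [← hs₀]; field_simp
  have hcval : (1 - s₀) * L = c := by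
    rw [← hs₀]; field_simp; linarith
  obtain ⟨τ, hτσ, hτη⟩ : ∃ τ : ℝ → X,
      (∀ s, s ≤ s₀ → τ s = σ (s * L / D)) ∧
      (∀ s, ¬ s ≤ s₀ → τ s = η ((s - s₀) / (1 - s₀))) :=
    ⟨fun s => if s ≤ s₀ then σ (s * L / D) else η ((s - s₀) / (1 - s₀)),
      fun s hs => if_pos hs, fun s hs => if_neg hs⟩
  have hτ0 : τ 0 = x := by
    rw [hτσ 0 hs₀pos.le]
    norm_num [hσ0]
  have hs₀LD : s₀ * L / D = r := by
    rw [hs₀L, hxx'd, mul_div_assoc, div_self hDpos.ne', mul_one]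
  have hτs₀ : τ s₀ = x' := by
    rw [hτσ s₀ le_rfl, hs₀LD, hσr]
  -- bounds for the σ-branch argument
  have hargσ : ∀ s, 0 ≤ s → s ≤ s₀ → 0 ≤ s * L / D ∧ s * L / D ≤ r := by
    intro s hs hss
    constructor
    · positivity
    · rw [div_le_iff₀ hDpos]
      have h3 : s * L ≤ s₀ * L := mul_le_mul_of_nonneg_right hss hLpos.le
      rw [hs₀L] at h3
      linarith [hxx'd]
  -- the η-branch formula extends to s₀ itself
  have hτη' : ∀ s, s₀ ≤ s → s₀ < 1 → τ s = η ((s - s₀) / (1 - s₀)) := by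
    intro s hss hlt
    rcases eq_or_lt_of_le hss with h | h
    · rw [← h, hτs₀]
      simp [hη0]
    · exact hτη s (not_le.mpr h)
  -- u along τ
  have huτ : ∀ s, 0 ≤ s → s ≤ 1 → u (τ s) = u x - s * L := by
    intro s hs hs1
    by_cases hcase : s ≤ s₀
    · obtain ⟨hb0, hbr⟩ := hargσ s hs hcase
      rw [hτσ s hcase, huσ _ hb0 (hbr.trans hr1), div_mul_cancel₀ _ hDpos.ne']
    · have hs₀lt : s₀ < 1 := lt_of_lt_of_le (not_le.mp hcase) hs1
      have h1s₀ : 0 < 1 - s₀ := by linarith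
      have hb0 : 0 ≤ (s - s₀) / (1 - s₀) :=
        div_nonneg (by linarith [not_le.mp hcase]) h1s₀.le
      have hb1 : (s - s₀) / (1 - s₀) ≤ 1 := by
        rw [div_le_one h1s₀]; linarith
      rw [hτη s hcase, huη _ hb0 hb1]
      have e3 : (s - s₀) / (1 - s₀) * c = (s - s₀) * L := by
        rw [← hcval]; field_simp
      rw [e3]
      have hux'' : u x' = u x - s₀ * L := by rw [hs₀L]; linarith
      rw [hux'']; ring
  -- distance within the σ branch
  have dσ : ∀ p q, 0 ≤ p → p ≤ q → q ≤ s₀ → dist (τ p) (τ q) = (q - p) * L := by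
    intro p q hp hpq hq
    obtain ⟨hq0, hqr⟩ := hargσ q (hp.trans hpq) hq
    obtain ⟨hp0, _⟩ := hargσ p hp (hpq.trans hq)
    rw [hτσ p (hpq.trans hq), hτσ q hq]
    have h4 := hσ (p * L / D) (q * L / D) hp0
      (by gcongr)
      (hqr.trans hr1)
    rw [hσ0, hσ1, hD] at h4
    rw [h4]
    field_simp
  -- distance within the η branch
  have dη : ∀ p q, s₀ ≤ p → p ≤ q → q ≤ 1 → s₀ < 1 →
      dist (τ p) (τ q) = (q - p) * L := by
    intro p q hp hpq hq hlt
    have h1s₀ : 0 < 1 - s₀ := by linarith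
    rw [hτη' p hp hlt, hτη' q (hp.trans hpq) hlt]
    have h4 := hη ((p - s₀) / (1 - s₀)) ((q - s₀) / (1 - s₀))
      (div_nonneg (by linarith) h1s₀.le)
      (by gcongr)
      (by rw [div_le_one h1s₀]; linarith)
    rw [hη0, hη1, hc] at h4
    rw [h4, ← hcval]
    field_simp
    ring
  -- upper bound on distances along τ
  have hub : ∀ s s', 0 ≤ s → s ≤ s' → s' ≤ 1 → dist (τ s) (τ s') ≤ (s' - s) * L := by
    intro s s' hs hss hs1
    by_cases hcs : s' ≤ s₀
    · exact le_of_eq (dσ s s' hs hss hcs)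
    · have hlt : s₀ < 1 := lt_of_lt_of_le (not_le.mp hcs) hs1
      by_cases hcs2 : s ≤ s₀
      · calc dist (τ s) (τ s') ≤ dist (τ s) (τ s₀) + dist (τ s₀) (τ s') :=
              dist_triangle _ _ _
          _ = (s₀ - s) * L + (s' - s₀) * L := by
              rw [dσ s s₀ hs hcs2 le_rfl, dη s₀ s' le_rfl (not_le.mp hcs).le hs1 hlt]
          _ = (s' - s) * L := by ring
      · exact le_of_eq (dη s s' (not_le.mp hcs2).le hss hs1 hlt)
  -- exact distances along τ
  have hτdist : ∀ s s', 0 ≤ s → s ≤ s' → s' ≤ 1 →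
      dist (τ s) (τ s') = (s' - s) * L := by
    intro s s' hs hss hs1
    have hlb := lip (τ s) (τ s')
    rw [huτ s hs (hss.trans hs1), huτ s' (hs.trans hss) hs1] at hlb
    have h5 := hub s s' hs hss hs1
    have e : (s' - s) * L = s' * L - s * L := by ring
    linarith
  have hτ1 : τ 1 = y' := by
    rcases lt_or_eq_of_le hs₀le with h | h
    · rw [hτη' 1 h.le h, div_self (by linarith : (1:ℝ) - s₀ ≠ 0)]
      exact hη1
    · have hLa : L = a := by rw [← hs₀L, h, one_mul]
      have hc0 : c = 0 := by linarith
      have hx'y' : x' = y' := dist_eq_zero.mp (by rw [hc]; exact hc0)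
      rw [hτσ 1 (le_of_eq h.symm), one_mul, hLa, hxx'd,
        mul_div_assoc, div_self hDpos.ne', mul_one, hσr]
      exact hx'y'
  have hτL : dist (τ 0) (τ 1) = L := by
    have := hτdist 0 1 le_rfl zero_le_one le_rfl
    simpa using this
  have hτmin : IsMinCurve τ := by
    intro s s' hs hss hs1
    rw [hτdist s s' hs hss hs1, hτL]
  -- locate y on τ via non-branching
  obtain ⟨t, htdef⟩ : ∃ t, D / L = t := ⟨_, rfl⟩
  have ht0 : 0 < t := by rw [← htdef]; exact div_pos hDpos hLpos
  have ht1 : t ≤ 1 := by rw [← htdef, div_le_one hLpos]; exact hDle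
  have hs₀t : s₀ ≤ t := by
    rw [← htdef, ← hs₀]
    gcongr
  have hρd : ∀ s s', 0 ≤ s → s ≤ s' → s' ≤ 1 →
      dist (τ (s * t)) (τ (s' * t)) = (s' - s) * (t * L) := by
    intro s s' hs hss hs1
    have hb1 : s' * t ≤ 1 := by
      calc s' * t ≤ 1 * t := mul_le_mul_of_nonneg_right hs1 ht0.le
        _ = t := one_mul t
        _ ≤ 1 := ht1
    rw [hτdist (s * t) (s' * t) (by positivity)
      (mul_le_mul_of_nonneg_right hss ht0.le) hb1]
    ring
  have hρmin : IsMinCurve (fun s => τ (s * t)) := by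
    intro s s' hs hss hs1
    show dist (τ (s * t)) (τ (s' * t)) = (s' - s) * dist (τ (0 * t)) (τ (1 * t))
    have h0 : dist (τ (0 * t)) (τ (1 * t)) = t * L := by
      rw [hρd 0 1 le_rfl zero_le_one le_rfl]; ring
    rw [hρd s s' hs hss hs1, h0]
  have hcoin : ∀ s ∈ Set.Icc (0 : ℝ) r, σ s = (fun s => τ (s * t)) s := by
    intro s hsmem
    obtain ⟨hs0, hsr⟩ := hsmem
    have hst : s * t ≤ s₀ := by
      rw [← htdef, ← hs₀, ← mul_div_assoc, div_le_div_iff_of_pos_right hLpos]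
      have e2 : s * D ≤ r * D := mul_le_mul_of_nonneg_right hsr hDpos.le
      linarith [hxx'd]
    have harg : s * t * L / D = s := by
      rw [← htdef]
      field_simp
    show σ s = τ (s * t)
    rw [hτσ _ hst, harg]
  have hall := hnb σ (fun s => τ (s * t)) hσ hρmin 0 r le_rfl hr0 hr1 hcoin
  have hy : τ t = y := by
    have h := hall 1 ⟨zero_le_one, le_rfl⟩
    rw [hσ1] at h
    simp only [one_mul] at h
    exact h.symm
  exact ⟨τ, s₀, t, 1, hτmin, hs₀pos, hs₀t, ht1, le_rfl, hτ0, hτs₀, hy, hτ1⟩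
end

section
/- Let (X,d) be a non-branching metric space, ε > 0, and T : X → X a map. For each x ∈ X let σ_x : [0,1] → X be a constant-speed minimal curve with σ_x(0) = x and σ_x(1) = T(x). Let A ⊆ X be a set such that for all x, x' ∈ A the cyclical monotonicity inequality c_ε(x,T(x)) + c_ε(x',T(x')) ≤ c_ε(x,T(x')) + c_ε(x',T(x)) holds, where c_ε(a,b) := d(a,b) + ε·d(a,b)². Then for every t ∈ [0,1), the map x ↦ σ_x(t) is injective on A. -/
theorem stmt_9 {X : Type*} [MetricSpace X] (hnb : IsNonBranching X)
    (ε : ℝ) (hε : 0 < ε) (T : X → X) (σ : X → ℝ → X)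
    (hσ : ∀ x, IsMinCurve (σ x) ∧ σ x 0 = x ∧ σ x 1 = T x)
    (A : Set X)
    (hA : ∀ x ∈ A, ∀ x' ∈ A,
      (dist x (T x) + ε * dist x (T x) ^ 2) +
        (dist x' (T x') + ε * dist x' (T x') ^ 2) ≤
      (dist x (T x') + ε * dist x (T x') ^ 2) +
        (dist x' (T x) + ε * dist x' (T x) ^ 2))
    (t : ℝ) (ht : t ∈ Set.Ico (0 : ℝ) 1) :
    Set.InjOn (fun x => σ x t) A := by
  obtain ⟨ht0, ht1⟩ := ht
  rcases eq_or_lt_of_le ht0 with rfl | htpos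
  · intro x hxA x' hxA' h
    simp only at h
    rw [(hσ x).2.1, (hσ x').2.1] at h
    exact h
  intro x hxA x' hxA' h
  simp only at h
  obtain ⟨hxm, hx0, hx1⟩ := hσ x
  obtain ⟨hx'm, hx'0, hx'1⟩ := hσ x'
  set a := dist x (T x) with ha
  set b := dist x' (T x') with hb
  have hda : dist (σ x 0) (σ x 1) = a := by rw [hx0, hx1]
  have hdb : dist (σ x' 0) (σ x' 1) = b := by rw [hx'0, hx'1]
  have hxs : ∀ s : ℝ, 0 ≤ s → s ≤ 1 → dist x (σ x s) = s * a := by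
    intro s h0 h1
    have := hxm 0 s le_rfl h0 h1
    rw [hda, hx0] at this; simpa using this
  have hxs' : ∀ s : ℝ, 0 ≤ s → s ≤ 1 → dist x' (σ x' s) = s * b := by
    intro s h0 h1
    have := hx'm 0 s le_rfl h0 h1
    rw [hdb, hx'0] at this; simpa using this
  have hxe : ∀ s : ℝ, 0 ≤ s → s ≤ 1 → dist (σ x s) (T x) = (1 - s) * a := by
    intro s h0 h1
    have := hxm s 1 h0 h1 le_rfl
    rw [hda, hx1] at this; exact this
  have hxe' : ∀ s : ℝ, 0 ≤ s → s ≤ 1 → dist (σ x' s) (T x') = (1 - s) * b := by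
    intro s h0 h1
    have := hx'm s 1 h0 h1 le_rfl
    rw [hdb, hx'1] at this; exact this
  have hu : dist x (T x') ≤ t * a + (1 - t) * b := by
    calc dist x (T x') ≤ dist x (σ x t) + dist (σ x t) (T x') := dist_triangle _ _ _
      _ = t * a + (1 - t) * b := by
          rw [hxs t ht0 ht1.le, h, hxe' t ht0 ht1.le]
  have hv : dist x' (T x) ≤ (1 - t) * a + t * b := by
    calc dist x' (T x) ≤ dist x' (σ x' t) + dist (σ x' t) (T x) := dist_triangle _ _ _
      _ = (1 - t) * a + t * b := by
          rw [hxs' t ht0 ht1.le, ← h, hxe t ht0 ht1.le]; ring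
  have hAin := hA x hxA x' hxA'
  rw [← ha, ← hb] at hAin
  have hu0 : (0:ℝ) ≤ dist x (T x') := dist_nonneg
  have hv0 : (0:ℝ) ≤ dist x' (T x) := dist_nonneg
  have ha0 : (0:ℝ) ≤ a := dist_nonneg
  have hb0 : (0:ℝ) ≤ b := dist_nonneg
  have hu2 : dist x (T x') ^ 2 ≤ (t * a + (1 - t) * b) ^ 2 := by nlinarith
  have hv2 : dist x' (T x) ^ 2 ≤ ((1 - t) * a + t * b) ^ 2 := by nlinarith
  have hab : a = b := by
    have hst : 0 < t * (1 - t) := by nlinarith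
    have : (a - b) ^ 2 ≤ 0 := by nlinarith [mul_pos hε hst, sq_nonneg (a - b)]
    have : a - b = 0 := by nlinarith [sq_nonneg (a - b)]
    linarith
  have hueq : dist x (T x') = a := by
    have e1 : t * a + (1 - t) * b = a := by rw [hab]; ring
    have e2 : (1 - t) * a + t * b = a := by rw [hab]; ring
    have hu' : dist x (T x') ≤ a := hu.trans_eq e1
    have hv' : dist x' (T x) ≤ a := hv.trans_eq e2
    have hu2' : dist x (T x') ^ 2 ≤ a ^ 2 := pow_le_pow_left₀ hu0 hu' 2
    have hv2' : dist x' (T x) ^ 2 ≤ a ^ 2 := pow_le_pow_left₀ hv0 hv' 2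
    rw [← hab] at hAin
    linarith [mul_le_mul_of_nonneg_left hu2' hε.le, mul_le_mul_of_nonneg_left hv2' hε.le]
  set τ : ℝ → X := fun s => if s ≤ t then σ x s else σ x' s with hτdef
  have hτ0 : τ 0 = x := by simp only [hτdef, if_pos ht0]; exact hx0
  have hτ1 : τ 1 = T x' := by
    simp only [hτdef, if_neg (not_le.2 ht1)]; exact hx'1
  have hτ01 : dist (τ 0) (τ 1) = a := by rw [hτ0, hτ1]; exact hueq
  have hτmin : IsMinCurve τ := by
    intro s s' hs hss hs'
    rw [hτ01]
    by_cases h1 : s' ≤ t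
    · simp only [hτdef, if_pos h1, if_pos (hss.trans h1)]
      rw [hxm s s' hs hss (h1.trans ht1.le), hda]
    · by_cases h2 : s ≤ t
      · simp only [hτdef, if_pos h2, if_neg h1]
        push_neg at h1
        have hup : dist (σ x s) (σ x' s') ≤ (s' - s) * a := by
          calc dist (σ x s) (σ x' s')
              ≤ dist (σ x s) (σ x t) + dist (σ x t) (σ x' s') := dist_triangle _ _ _
            _ = (t - s) * a + (s' - t) * b := by
                rw [hxm s t hs h2 ht1.le, hda, h, hx'm t s' ht0 h1.le hs', hdb]
            _ = (s' - s) * a := by rw [← hab]; ring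
        have hlo : (s' - s) * a ≤ dist (σ x s) (σ x' s') := by
          have htri : dist x (T x') ≤ dist x (σ x s) + dist (σ x s) (σ x' s')
              + dist (σ x' s') (T x') := dist_triangle4 _ _ _ _
          rw [hueq, hxs s hs (hss.trans hs'), hxe' s' (hs.trans hss) hs'] at htri
          rw [hab] at htri ⊢
          linarith
        linarith
      · push_neg at h2
        simp only [hτdef, if_neg (not_le.2 (h2.trans_le hss)), if_neg (not_le.2 h2)]
        rw [hx'm s s' hs hss hs', hdb, hab]
  have hcoin : ∀ s ∈ Set.Icc t 1, τ s = σ x' s := by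
    rintro s ⟨hs1, hs2⟩
    by_cases hst : s ≤ t
    · have heq : s = t := le_antisymm hst hs1
      subst heq
      simp only [hτdef, if_pos le_rfl]; exact h
    · simp only [hτdef, if_neg hst]
  have hfin := hnb τ (σ x') hτmin hx'm t 1 ht0 ht1 le_rfl hcoin 0 ⟨le_rfl, zero_le_one⟩
  rw [hτ0, hx'0] at hfin
  exact hfin
end

section
/- Let X be a metric space equipped with its Borel σ-algebra, λ a Borel measure on X, and μ̄ a Borel probability measure on X with μ̄ ≪ λ and density ρ satisfying ρ ≤ M λ-almost everywhere, for some constant M ∈ [0,∞). Let F : X → X be Borel measurable, A ⊆ X a Borel set with μ̄(A) = 1, and C ∈ (0,∞) a constant such that λ(E) ≤ C·λ(F(E)) for every subset E ⊆ A (where λ of an arbitrary set is taken as the induced outer measure). Then the pushforward F♯μ̄ is absolutely continuous with respect to λ, and moreover (F♯μ̄)(B) ≤ C·M·λ(B) for every Borel set B ⊆ X; in particular F♯μ̄ has a density bounded λ-a.e. by C·M. -/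
open MeasureTheory

theorem stmt_10 {X : Type*} [MetricSpace X] [MeasurableSpace X] [BorelSpace X]
    (lam : Measure X) (μ : Measure X) [IsProbabilityMeasure μ]
    (ρ : X → ENNReal) (hρmeas : Measurable ρ)
    (M : ENNReal) (hM : M ≠ ⊤)
    (hmulam : μ = lam.withDensity ρ)
    (hρM : ∀ᵐ x ∂lam, ρ x ≤ M)
    (F : X → X) (hF : Measurable F)
    (A : Set X) (hA : MeasurableSet A) (hμA : μ A = 1)
    (C : ENNReal) (hC0 : 0 < C) (hCtop : C ≠ ⊤)
    (hcontr : ∀ E : Set X, E ⊆ A → lam E ≤ C * lam (F '' E)) :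
    μ.map F ≪ lam ∧
      ∀ B : Set X, MeasurableSet B → (μ.map F) B ≤ C * M * lam B := by
  have hAc : μ Aᶜ = 0 := by
    have := measure_compl hA (measure_ne_top μ A)
    simp [hμA] at this
    simpa using this
  have key : ∀ B : Set X, MeasurableSet B → (μ.map F) B ≤ C * M * lam B := by
    intro B hB
    rw [Measure.map_apply hF hB]
    set s := F ⁻¹' B ∩ A with hs
    have hsm : MeasurableSet s := (hF hB).inter hA
    have h1 : μ (F ⁻¹' B) = μ s := (measure_inter_conull hAc).symm
    have h2 : μ s ≤ M * lam s := by
      rw [hmulam, withDensity_apply _ hsm]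
      calc ∫⁻ x in s, ρ x ∂lam ≤ ∫⁻ _ in s, M ∂lam :=
            setLIntegral_mono_ae (measurable_const.aemeasurable)
              (hρM.mono fun x hx => fun _ => hx)
        _ = M * lam s := by rw [setLIntegral_const]
    have h3 : lam s ≤ C * lam B := by
      calc lam s ≤ C * lam (F '' s) := hcontr s Set.inter_subset_right
        _ ≤ C * lam B := by
            gcongr
            exact (Set.image_mono Set.inter_subset_left).trans
              (Set.image_preimage_subset F B)
    calc μ (F ⁻¹' B) = μ s := h1
      _ ≤ M * lam s := h2
      _ ≤ M * (C * lam B) := by gcongr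
      _ = C * M * lam B := by ring
  refine ⟨Measure.AbsolutelyContinuous.mk fun t ht h0 => ?_, key⟩
  have := key t ht
  rw [h0, mul_zero] at this
  exact le_antisymm this zero_le
end

section
/- Let X be a complete separable metric space, c : X × X → [0,∞] a Borel cost function, and γ a finite Borel measure on X × X with ∫ c dγ < ∞ which is optimal between its own marginals, i.e., ∫ c dγ ≤ ∫ c dγ' for every finite Borel measure γ' on X × X having the same first marginal and the same second marginal as γ. Then for every Borel set U ⊆ X × X, the restriction γ⌊U is optimal between its own marginals: ∫ c d(γ⌊U) ≤ ∫ c dη for every finite Borel measure η on X × X having the same first and second marginals as γ⌊U. -/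
open MeasureTheory

theorem stmt_11 {X : Type*} [MetricSpace X] [CompleteSpace X]
    [TopologicalSpace.SeparableSpace X] [MeasurableSpace X] [BorelSpace X]
    (c : X × X → ENNReal) (hc : Measurable c)
    (γ : Measure (X × X)) [IsFiniteMeasure γ]
    (hfin : ∫⁻ p, c p ∂γ < ⊤)
    (hopt : ∀ γ' : Measure (X × X), IsFiniteMeasure γ' →
      γ'.map Prod.fst = γ.map Prod.fst → γ'.map Prod.snd = γ.map Prod.snd →
      ∫⁻ p, c p ∂γ ≤ ∫⁻ p, c p ∂γ') :
    ∀ U : Set (X × X), MeasurableSet U →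
      ∀ η : Measure (X × X), IsFiniteMeasure η →
        η.map Prod.fst = (γ.restrict U).map Prod.fst →
        η.map Prod.snd = (γ.restrict U).map Prod.snd →
        ∫⁻ p, c p ∂(γ.restrict U) ≤ ∫⁻ p, c p ∂η := by
  intro U hU η hη h1 h2
  set γ' := η + γ.restrict Uᶜ with hγ'
  have hsplit : γ.restrict U + γ.restrict Uᶜ = γ := Measure.restrict_add_restrict_compl hU
  have hfm : IsFiniteMeasure γ' := by
    constructor
    simp only [hγ', Measure.add_apply]
    exact ENNReal.add_lt_top.2 ⟨measure_lt_top η _,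
      lt_of_le_of_lt (Measure.restrict_apply_le _ _) (measure_lt_top γ _)⟩
  have hm1 : γ'.map Prod.fst = γ.map Prod.fst := by
    rw [hγ', Measure.map_add _ _ measurable_fst, h1, ← Measure.map_add _ _ measurable_fst,
      hsplit]
  have hm2 : γ'.map Prod.snd = γ.map Prod.snd := by
    rw [hγ', Measure.map_add _ _ measurable_snd, h2, ← Measure.map_add _ _ measurable_snd,
      hsplit]
  have key := hopt γ' hfm hm1 hm2
  rw [hγ', lintegral_add_measure] at key
  have hγint : ∫⁻ p, c p ∂γ = ∫⁻ p, c p ∂(γ.restrict U) + ∫⁻ p, c p ∂(γ.restrict Uᶜ) := by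
    rw [← lintegral_add_measure, hsplit]
  rw [hγint] at key
  have hc' : ∫⁻ p, c p ∂(γ.restrict Uᶜ) ≠ ⊤ := by
    refine ne_top_of_le_ne_top hfin.ne ?_
    exact lintegral_mono' (Measure.restrict_le_self) le_rfl
  exact (ENNReal.add_le_add_iff_right hc').1 key
end

section
/- Let (X,d) be a separable metric space and μ a locally finite, uniformly locally doubling Borel measure on X. Let γ be a Borel probability measure on X × X whose first marginal π₁♯γ is absolutely continuous with respect to μ. For a finite Borel measure m on X define its upper density ρ_m(x) := limsup_{r→0⁺} m(B(x,r))/μ(B(x,r)), and write ρ := ρ_{π₁♯γ}. Then γ is concentrated on a set Γ (there is a Borel set Γ with γ(Γ) = 1) such that for every (x,y) ∈ Γ and every r > 0 there exist y' ∈ X and r' > 0 with: (i) y ∈ B(y',r') and the closure of B(y',r') is contained in B(y,r); (ii) x is a Lebesgue point of ρ and ρ(x) < ∞; (iii) x is a Lebesgue point of ρ' := ρ_{π₁♯(γ⌊(X × B(y',r')))} and ρ'(x) > 0. -/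
open MeasureTheory Filter

/-- The upper density at `x` of a measure `m` with respect to a reference
measure `μ` on a metric space: `limsup_{r→0⁺} m(B(x,r))/μ(B(x,r))`. -/
noncomputable def upperDensity {X : Type*} [MetricSpace X] [MeasurableSpace X]
    (μ m : Measure X) (x : X) : ENNReal :=
  limsup (fun r : ℝ => m (Metric.ball x r) / μ (Metric.ball x r))
    (nhdsWithin 0 (Set.Ioi 0))

/-- `x` is a Lebesgue point of the (`ℝ≥0∞`-valued) function `f` with respect to
`μ`: the averages of `|f - f x|` over small balls centered at `x` tend to `0`.
(For extended nonnegative reals, `|a - b| = (a - b) + (b - a)` using truncated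
subtraction.) -/
def IsLebesguePoint {X : Type*} [MetricSpace X] [MeasurableSpace X]
    (μ : Measure X) (f : X → ENNReal) (x : X) : Prop :=
  Tendsto
    (fun r : ℝ =>
      (∫⁻ z in Metric.ball x r, (f z - f x) + (f x - f z) ∂μ) / μ (Metric.ball x r))
    (nhdsWithin 0 (Set.Ioi 0)) (nhds 0)

open Metric Set Topology
open scoped ENNReal NNReal

set_option linter.unusedSectionVars false

lemma aux_abs {a b : ℝ≥0∞} (ha : a ≠ ⊤) (hb : b ≠ ⊤) :
    (a - b) + (b - a) = ENNReal.ofReal ‖a.toReal - b.toReal‖ := by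
  rcases le_total a b with hab | hab
  · rw [tsub_eq_zero_of_le hab, zero_add,
      ← ENNReal.ofReal_toReal (ENNReal.sub_ne_top hb),
      ENNReal.toReal_sub_of_le hab hb, Real.norm_eq_abs, abs_sub_comm,
      abs_of_nonneg (sub_nonneg.mpr ((ENNReal.toReal_le_toReal ha hb).mpr hab))]
  · rw [tsub_eq_zero_of_le hab, add_zero,
      ← ENNReal.ofReal_toReal (ENNReal.sub_ne_top ha),
      ENNReal.toReal_sub_of_le hab ha, Real.norm_eq_abs,
      abs_of_nonneg (sub_nonneg.mpr ((ENNReal.toReal_le_toReal hb ha).mpr hab))]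

section Aux
variable {X : Type*} [MetricSpace X] [MeasurableSpace X] [BorelSpace X]
  [SecondCountableTopology X]
  (μ : Measure X) [IsLocallyFiniteMeasure μ] [IsUnifLocDoublingMeasure μ]

lemma aux_finR (x : X) : ∃ R > (0:ℝ), μ (closedBall x R) ≠ ⊤ := by
  obtain ⟨s, hs, hμs⟩ := μ.finiteAt_nhds x
  obtain ⟨ε, hε, hball⟩ := Metric.mem_nhds_iff.mp hs
  exact ⟨ε/2, by linarith, ne_top_of_le_ne_top hμs.ne
    (measure_mono ((closedBall_subset_ball (by linarith)).trans hball))⟩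

omit [BorelSpace X] [IsLocallyFiniteMeasure μ] [IsUnifLocDoublingMeasure μ] in
lemma aux_ae_ball_pos : ∀ᵐ x ∂μ, ∀ r > (0:ℝ), 0 < μ (ball x r) := by
  obtain ⟨D, Dc, Dd⟩ := TopologicalSpace.exists_countable_dense X
  haveI := Dc.to_subtype
  set N : Set X := ⋃ (p : D × ℚ) (_ : μ (ball (p.1 : X) (p.2 : ℝ)) = 0),
      ball (p.1 : X) (p.2 : ℝ) with hNdef
  have hN : μ N = 0 := measure_iUnion_null fun p => measure_iUnion_null fun h => h
  have key : ∀ x, x ∉ N → ∀ r > (0:ℝ), 0 < μ (ball x r) := by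
    intro x hx r hr
    by_contra h
    push_neg at h
    have h0 : μ (ball x r) = 0 := le_antisymm h zero_le
    obtain ⟨y, hyD, hy⟩ := Dd.exists_dist_lt x (show (0:ℝ) < r/4 by linarith)
    obtain ⟨q, hq1, hq2⟩ := exists_rat_btwn (show (r/4 : ℝ) < r/2 by linarith)
    apply hx
    have hsub : ball y (q:ℝ) ⊆ ball x r := by
      intro z hz
      rw [mem_ball] at hz ⊢
      have := dist_triangle z y x
      have h2 : dist y x < r / 4 := by rw [dist_comm]; exact hy
      linarith
    refine mem_iUnion.2 ⟨(⟨y, hyD⟩, q), mem_iUnion.2 ⟨?_, ?_⟩⟩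
    · exact le_antisymm ((measure_mono hsub).trans h0.le) zero_le
    · exact show dist x y < (q:ℝ) by linarith
  filter_upwards [(measure_eq_zero_iff_ae_notMem (μ := μ)).mp hN] with x hx using key x hx

lemma aux_ae_closed (m : Measure X) [IsFiniteMeasure m] :
    ∀ᵐ x ∂μ, Tendsto (fun r => m (closedBall x r) / μ (closedBall x r)) (𝓝[>] 0)
      (𝓝 (m.rnDeriv μ x)) := by
  filter_upwards [(IsUnifLocDoublingMeasure.vitaliFamily μ 1).ae_tendsto_rnDeriv m] with x hx
  refine hx.comp (IsUnifLocDoublingMeasure.tendsto_closedBall_filterAt μ (fun _ => x)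
    (fun r => r) tendsto_id ?_)
  filter_upwards [self_mem_nhdsWithin] with r hr
  simp only [mem_closedBall, dist_self, one_mul]
  exact le_of_lt hr

omit [BorelSpace X] [IsLocallyFiniteMeasure μ] [IsUnifLocDoublingMeasure μ]
  [SecondCountableTopology X] in
lemma aux_ball_tendsto {m : Measure X} [IsFiniteMeasure m] {x : X} {L : ℝ≥0∞} (hL : L ≠ ⊤)
    (hpos : ∀ r > (0:ℝ), 0 < μ (ball x r)) {R : ℝ} (hR : 0 < R)
    (hRfin : μ (closedBall x R) ≠ ⊤)
    (h : Tendsto (fun r => m (closedBall x r) / μ (closedBall x r)) (𝓝[>] 0) (𝓝 L)) :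
    Tendsto (fun r => m (ball x r) / μ (ball x r)) (𝓝[>] 0) (𝓝 L) := by
  rw [ENNReal.tendsto_nhds hL] at h ⊢
  intro ε εpos
  obtain ⟨r₀, hr₀, hIoo⟩ := mem_nhdsGT_iff_exists_Ioo_subset.mp (h ε εpos)
  have hr₀' : (0:ℝ) < r₀ := hr₀
  have hmin : (0:ℝ) < min r₀ R := lt_min hr₀' hR
  filter_upwards [Ioo_mem_nhdsGT hmin] with r hr
  obtain ⟨hr0, hrm⟩ := hr
  have hrr₀ : r < r₀ := lt_of_lt_of_le hrm (min_le_left _ _)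
  have hrR : r < R := lt_of_lt_of_le hrm (min_le_right _ _)
  set u : ℕ → ℝ := fun n => r - r / (n + 2) with hu
  have hcast : ∀ n : ℕ, (0:ℝ) < (n:ℝ) + 2 := by
    intro n; have := Nat.cast_nonneg (α := ℝ) n; linarith
  have hupos : ∀ n, 0 < u n := by
    intro n
    have h2 : (1:ℝ) < (n:ℝ) + 2 := by have := Nat.cast_nonneg (α := ℝ) n; linarith
    have : r / ((n:ℝ) + 2) < r := div_lt_self hr0 h2
    simpa [hu] using sub_pos.mpr this
  have hulr : ∀ n, u n < r := by
    intro n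
    have : 0 < r / ((n:ℝ) + 2) := div_pos hr0 (hcast n)
    simpa [hu] using sub_lt_self r this
  have humono : Monotone u := by
    intro a b hab
    have hle : r / ((b:ℝ) + 2) ≤ r / ((a:ℝ) + 2) := by
      apply div_le_div_of_nonneg_left hr0.le (hcast a)
      have := (Nat.cast_le (α := ℝ)).mpr hab; linarith
    simpa [hu] using sub_le_sub_left hle r
  have hulim : Tendsto u atTop (𝓝 r) := by
    have h0 : Tendsto (fun n : ℕ => r / ((n:ℝ) + 2)) atTop (𝓝 0) :=
      Tendsto.div_atTop tendsto_const_nhds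
        (tendsto_atTop_add_const_right _ 2 tendsto_natCast_atTop_atTop)
    simpa [hu] using tendsto_const_nhds.sub h0
  have hUb : (⋃ n, closedBall x (u n)) = ball x r := by
    ext z
    simp only [mem_iUnion, mem_closedBall, mem_ball]
    constructor
    · rintro ⟨n, hn⟩; exact lt_of_le_of_lt hn (hulr n)
    · intro hz
      obtain ⟨n, hn⟩ := (hulim.eventually (eventually_gt_nhds hz)).exists
      exact ⟨n, hn.le⟩
  have hcmono : Monotone fun n => closedBall x (u n) := fun a b hab =>
    closedBall_subset_closedBall (humono hab)
  have hA := tendsto_measure_iUnion_atTop (μ := m) hcmono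
  have hB := tendsto_measure_iUnion_atTop (μ := μ) hcmono
  rw [hUb] at hA hB
  have hBpos : (0:ℝ≥0∞) < μ (ball x r) := hpos r hr0
  have hBfin : μ (ball x r) ≠ ⊤ := by
    refine (lt_of_le_of_lt (measure_mono ?_) hRfin.lt_top).ne
    exact ball_subset_closedBall.trans (closedBall_subset_closedBall hrR.le)
  have hdiv := ENNReal.Tendsto.div hA (Or.inr hBpos.ne') hB (Or.inl hBfin)
  exact isClosed_Icc.mem_of_tendsto hdiv
    (Eventually.of_forall fun n => hIoo ⟨hupos n, (hulr n).trans hrr₀⟩)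

lemma aux_ae_good (m : Measure X) [IsFiniteMeasure m] :
    ∀ᵐ x ∂μ, upperDensity μ m x = m.rnDeriv μ x ∧
      IsLebesguePoint μ (upperDensity μ m) x := by
  set g := m.rnDeriv μ with hg
  have hgm : Measurable g := Measure.measurable_rnDeriv m μ
  have hgint : ∫⁻ z, g z ∂μ ≠ ⊤ := (Measure.lintegral_rnDeriv_lt_top m μ).ne
  have hh : Integrable (fun z => (g z).toReal) μ :=
    integrable_toReal_of_lintegral_ne_top hgm.aemeasurable hgint
  have h1 := aux_ae_closed μ m
  have h2 := Measure.rnDeriv_lt_top m μ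
  have h3 := aux_ae_ball_pos μ
  have h4 := IsUnifLocDoublingMeasure.ae_tendsto_average_norm_sub (μ := μ)
    hh.locallyIntegrable 1
  have hfg : ∀ᵐ x ∂μ, upperDensity μ m x = g x := by
    filter_upwards [h1, h2, h3] with x hx1 hx2 hx3
    obtain ⟨R, hR, hRfin⟩ := aux_finR μ x
    exact (aux_ball_tendsto μ hx2.ne hx3 hR hRfin hx1).limsup_eq
  -- doubling
  obtain ⟨C, hC⟩ := IsUnifLocDoublingMeasure.exists_eventually_forall_measure_closedBall_le_mul μ 2
  set D : ℝ≥0 := C + 1 with hD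
  have hD0 : (D:ℝ≥0∞) ≠ 0 := by simp [hD]
  have hDtop : (D:ℝ≥0∞) ≠ ⊤ := ENNReal.coe_ne_top
  have hCd : ∀ᶠ r in 𝓝[>] (0:ℝ), ∀ x : X, μ (closedBall x r) ≤ D * μ (closedBall x (r/2)) := by
    have ht : Tendsto (fun r : ℝ => 1/2 * r) (𝓝[>] 0) (𝓝[>] 0) :=
      tendsto_nhdsWithin_of_tendsto_nhds_of_eventually_within _
        (tendsto_nhdsWithin_of_tendsto_nhds
          (Continuous.tendsto' (continuous_mul_left (1/2:ℝ)) 0 0 (by ring)))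
        (by filter_upwards [self_mem_nhdsWithin] with r hr; exact mul_pos (by norm_num : (0:ℝ) < 1/2) hr)
    have h' := ht.eventually hC
    filter_upwards [h'] with r hr x
    have h'' := hr x 2 le_rfl
    have e1 : (2:ℝ) * (1/2 * r) = r := by ring
    have e2 : (1:ℝ)/2 * r = r/2 := by ring
    rw [e1, e2] at h''
    refine h''.trans (mul_le_mul_left ?_ _)
    exact_mod_cast le_add_of_nonneg_right (zero_le_one' ℝ≥0)
  filter_upwards [hfg, h2, h3, h4,
    (aux_ae_ball_pos μ).and hfg] with x hx1 hx2 hx3 hx4 _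
  refine ⟨hx1, ?_⟩
  obtain ⟨R, hRpos, hRfin⟩ := aux_finR μ x
  set f := upperDensity μ m with hf
  set c := (g x).toReal with hc
  have hleb : Tendsto (fun r : ℝ => ⨍ y in closedBall x r, ‖(g y).toReal - c‖ ∂μ)
      (𝓝[>] 0) (𝓝 0) := by
    refine hx4 (fun _ => x) (fun r => r) tendsto_id ?_
    filter_upwards [self_mem_nhdsWithin] with r hr
    simp only [mem_closedBall, dist_self, one_mul]
    exact le_of_lt hr
  set Num : ℝ → ℝ≥0∞ := fun r => ∫⁻ z in closedBall x r,
    ENNReal.ofReal ‖(g z).toReal - c‖ ∂μ with hNum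
  have hint_eq : ∀ᵐ z ∂μ, (f z - f x) + (f x - f z)
      = ENNReal.ofReal ‖(g z).toReal - c‖ := by
    filter_upwards [hfg, h2] with z hz1 hz2
    rw [hz1, hx1, hc, aux_abs hz2.ne hx2.ne]
  have hintg : ∀ r : ℝ, (∫⁻ z in ball x r, (f z - f x) + (f x - f z) ∂μ)
      = ∫⁻ z in ball x r, ENNReal.ofReal ‖(g z).toReal - c‖ ∂μ := fun r =>
    lintegral_congr_ae (ae_restrict_of_ae hint_eq)
  -- the main tendsto of the upper bound
  have hu2' : Tendsto (fun r => Num r / μ (closedBall x r)) (𝓝[>] 0) (𝓝 0) := by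
    have heq : (fun r => ENNReal.ofReal (⨍ y in closedBall x r, ‖(g y).toReal - c‖ ∂μ))
        =ᶠ[𝓝[>] (0:ℝ)] (fun r => Num r / μ (closedBall x r)) := by
      filter_upwards [Ioo_mem_nhdsGT hRpos] with r hr
      obtain ⟨hr0, hrR⟩ := hr
      have hfinr : μ (closedBall x r) ≠ ⊤ :=
        ne_top_of_le_ne_top hRfin (measure_mono (closedBall_subset_closedBall hrR.le))
      have hposr : μ (closedBall x r) ≠ 0 :=
        ((hx3 r hr0).trans_le (measure_mono ball_subset_closedBall)).ne'
      have hInt : IntegrableOn (fun z => ‖(g z).toReal - c‖) (closedBall x r) μ :=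
        ((hh.restrict).sub (integrableOn_const hfinr)).norm
      have hNr : Num r = ENNReal.ofReal (∫ z in closedBall x r, ‖(g z).toReal - c‖ ∂μ) :=
        (ofReal_integral_eq_lintegral_ofReal hInt
          (Eventually.of_forall fun z => norm_nonneg _)).symm
      rw [hNr, setAverage_eq, smul_eq_mul, measureReal_def,
        ENNReal.ofReal_mul (inv_nonneg.mpr ENNReal.toReal_nonneg),
        ENNReal.ofReal_inv_of_pos (ENNReal.toReal_pos hposr hfinr),
        ENNReal.ofReal_toReal hfinr, div_eq_mul_inv]
      exact mul_comm _ _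
    refine Tendsto.congr' heq ?_
    have := (ENNReal.continuous_ofReal.tendsto 0).comp hleb
    simpa [Function.comp_def] using this
  have hu2 : Tendsto (fun r => (D:ℝ≥0∞) * (Num r / μ (closedBall x r))) (𝓝[>] 0) (𝓝 0) := by
    have := ENNReal.Tendsto.const_mul hu2' (Or.inr hDtop)
    simpa using this
  rw [IsLebesguePoint]
  refine tendsto_of_tendsto_of_tendsto_of_le_of_le' tendsto_const_nhds hu2
    (Eventually.of_forall fun r => zero_le) ?_
  filter_upwards [hCd, self_mem_nhdsWithin] with r hdr hr0
  have hb1 : (∫⁻ z in ball x r, (f z - f x) + (f x - f z) ∂μ) / μ (ball x r)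
      ≤ Num r / μ (closedBall x (r/2)) := by
    rw [hintg r]
    exact ENNReal.div_le_div (lintegral_mono_set ball_subset_closedBall)
      (measure_mono (closedBall_subset_ball (half_lt_self hr0)))
  refine hb1.trans ?_
  calc Num r / μ (closedBall x (r/2))
      = ((D:ℝ≥0∞) * Num r) / ((D:ℝ≥0∞) * μ (closedBall x (r/2))) :=
        (ENNReal.mul_div_mul_left _ _ hD0 hDtop).symm
    _ ≤ ((D:ℝ≥0∞) * Num r) / μ (closedBall x r) := ENNReal.div_le_div le_rfl (hdr x)
    _ = (D:ℝ≥0∞) * (Num r / μ (closedBall x r)) := mul_div_assoc _ _ _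

end Aux

theorem stmt_13 {X : Type*} [MetricSpace X] [TopologicalSpace.SeparableSpace X]
    [MeasurableSpace X] [BorelSpace X]
    (μ : Measure X) [IsLocallyFiniteMeasure μ] [IsUnifLocDoublingMeasure μ]
    (γ : Measure (X × X)) [IsProbabilityMeasure γ]
    (habs : γ.map Prod.fst ≪ μ) :
    ∃ Γ : Set (X × X), MeasurableSet Γ ∧ γ Γ = 1 ∧
      ∀ p ∈ Γ, ∀ r > (0 : ℝ), ∃ (y' : X) (r' : ℝ), 0 < r' ∧
        p.2 ∈ Metric.ball y' r' ∧
        closure (Metric.ball y' r') ⊆ Metric.ball p.2 r ∧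
        IsLebesguePoint μ (upperDensity μ (γ.map Prod.fst)) p.1 ∧
        upperDensity μ (γ.map Prod.fst) p.1 < ⊤ ∧
        IsLebesguePoint μ
          (upperDensity μ
            ((γ.restrict (Set.univ ×ˢ Metric.ball y' r')).map Prod.fst)) p.1 ∧
        0 < upperDensity μ
            ((γ.restrict (Set.univ ×ˢ Metric.ball y' r')).map Prod.fst) p.1 := by
  haveI : SecondCountableTopology X := UniformSpace.secondCountable_of_separable X
  haveI hfin0 : IsFiniteMeasure (γ.map Prod.fst) := by
    constructor
    rw [Measure.map_apply measurable_fst MeasurableSet.univ]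
    exact measure_lt_top γ _
  obtain ⟨Dset, Dc, Dd⟩ := TopologicalSpace.exists_countable_dense X
  haveI := Dc.to_subtype
  set U : ↥Dset × ℚ → Set X := fun i => Metric.ball (i.1 : X) (i.2 : ℝ) with hU
  set mI : ↥Dset × ℚ → Measure X :=
    fun i => (γ.restrict (Set.univ ×ˢ U i)).map Prod.fst with hmI
  have hle : ∀ i, mI i ≤ γ.map Prod.fst := fun i =>
    Measure.map_mono Measure.restrict_le_self measurable_fst
  have hfinI : ∀ i, IsFiniteMeasure (mI i) := fun i =>
    isFiniteMeasure_of_le _ (hle i)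
  have habsI : ∀ i, mI i ≪ μ := fun i =>
    (Measure.absolutelyContinuous_of_le (hle i)).trans habs
  -- good set for the base measure
  have hG0 : ∀ᵐ x ∂(γ.map Prod.fst),
      IsLebesguePoint μ (upperDensity μ (γ.map Prod.fst)) x ∧
        upperDensity μ (γ.map Prod.fst) x < ⊤ := by
    have h := aux_ae_good μ (γ.map Prod.fst)
    have h2 := Measure.rnDeriv_lt_top (γ.map Prod.fst) μ
    have h3 : ∀ᵐ x ∂μ,
        IsLebesguePoint μ (upperDensity μ (γ.map Prod.fst)) x ∧
          upperDensity μ (γ.map Prod.fst) x < ⊤ := by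
      filter_upwards [h, h2] with x hx hfin
      exact ⟨hx.2, hx.1 ▸ hfin⟩
    exact Eventually.filter_mono habs.ae_le h3
  have hGI : ∀ i, ∀ᵐ x ∂(mI i),
      IsLebesguePoint μ (upperDensity μ (mI i)) x ∧ 0 < upperDensity μ (mI i) x := by
    intro i
    haveI := hfinI i
    have h := aux_ae_good μ (mI i)
    have hpos := Measure.rnDeriv_pos (habsI i)
    have h' := Eventually.filter_mono (habsI i).ae_le h
    filter_upwards [h', hpos] with x hx hp
    exact ⟨hx.2, hx.1 ▸ hp⟩
  -- null sets
  set T0 : Set X := toMeasurable (γ.map Prod.fst)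
    {x | ¬ (IsLebesguePoint μ (upperDensity μ (γ.map Prod.fst)) x ∧
      upperDensity μ (γ.map Prod.fst) x < ⊤)} with hT0def
  have hT0m : MeasurableSet T0 := measurableSet_toMeasurable _ _
  have hT00 : (γ.map Prod.fst) T0 = 0 := by
    rw [hT0def, measure_toMeasurable]
    exact ae_iff.mp hG0
  set T : ↥Dset × ℚ → Set X := fun i => toMeasurable (mI i)
    {x | ¬ (IsLebesguePoint μ (upperDensity μ (mI i)) x ∧
      0 < upperDensity μ (mI i) x)} with hTdef
  have hTm : ∀ i, MeasurableSet (T i) := fun i => measurableSet_toMeasurable _ _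
  have hT0 : ∀ i, mI i (T i) = 0 := by
    intro i
    rw [hTdef, measure_toMeasurable]
    exact ae_iff.mp (hGI i)
  refine ⟨(Prod.fst ⁻¹' T0ᶜ) ∩
    ⋂ i, ((Prod.fst ⁻¹' (T i)ᶜ) ∪ (Prod.snd ⁻¹' (U i)ᶜ)), ?_, ?_, ?_⟩
  · exact (hT0m.compl.preimage measurable_fst).inter
      (MeasurableSet.iInter fun i =>
        ((hTm i).compl.preimage measurable_fst).union
          (measurableSet_ball.compl.preimage measurable_snd))
  · rw [← prob_compl_eq_zero_iff ((hT0m.compl.preimage measurable_fst).inter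
      (MeasurableSet.iInter fun i =>
        ((hTm i).compl.preimage measurable_fst).union
          (measurableSet_ball.compl.preimage measurable_snd)))]
    have hcompl : ((Prod.fst ⁻¹' T0ᶜ) ∩
        ⋂ i, ((Prod.fst ⁻¹' (T i)ᶜ) ∪ (Prod.snd ⁻¹' (U i)ᶜ)))ᶜ
        = (Prod.fst ⁻¹' T0) ∪
          ⋃ i, ((Prod.fst ⁻¹' (T i)) ∩ (Prod.snd ⁻¹' (U i))) := by
      ext p
      simp only [mem_compl_iff, mem_inter_iff, mem_iInter, mem_union, mem_iUnion,
        mem_preimage, not_and, not_forall, not_or, not_not]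
      tauto
    rw [hcompl]
    apply measure_union_null
    · rw [← Measure.map_apply measurable_fst hT0m]
      exact hT00
    · apply measure_iUnion_null
      intro i
      have huniv : (Prod.snd ⁻¹' (U i) : Set (X × X)) = Set.univ ×ˢ U i := by
        ext z; simp [Set.mem_prod]
      rw [huniv, ← Measure.restrict_apply ((hTm i).preimage measurable_fst),
        ← Measure.map_apply measurable_fst (hTm i)]
      exact hT0 i
  · rintro ⟨x, y⟩ hp r hr
    obtain ⟨hpx, hpi⟩ := hp
    rw [mem_preimage, mem_compl_iff] at hpx
    have hPx : IsLebesguePoint μ (upperDensity μ (γ.map Prod.fst)) x ∧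
        upperDensity μ (γ.map Prod.fst) x < ⊤ := by
      by_contra h
      exact hpx (subset_toMeasurable _ _ h)
    obtain ⟨y', hy'D, hy'⟩ := Dd.exists_dist_lt y (show (0:ℝ) < r/4 by linarith)
    obtain ⟨q, hq1, hq2⟩ := exists_rat_btwn (show (r/4 : ℝ) < r/2 by linarith)
    set i : ↥Dset × ℚ := (⟨y', hy'D⟩, q) with hi
    have hyU : y ∈ U i := by
      show dist y y' < (q:ℝ)
      linarith
    have hxT : x ∉ T i := by
      have := mem_iInter.mp hpi i
      rcases this with h | h
      · exact h
      · exact absurd hyU h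
    have hPxi : IsLebesguePoint μ (upperDensity μ (mI i)) x ∧
        0 < upperDensity μ (mI i) x := by
      by_contra h
      exact hxT (subset_toMeasurable _ _ h)
    refine ⟨y', (q:ℝ), by linarith, ?_, ?_, hPx.1, hPx.2, hPxi.1, hPxi.2⟩
    · show dist y y' < (q:ℝ)
      linarith
    · refine closure_ball_subset_closedBall.trans ?_
      intro z hz
      rw [mem_closedBall] at hz
      rw [mem_ball]
      have h1 : dist y' y < r/4 := by rw [dist_comm]; exact hy'
      have := dist_triangle z y' y
      linarith
end

section
/- Let (X,d) be a separable metric space and μ a locally finite, uniformly locally doubling Borel measure on X. Let γ be a Borel probability measure on X × X whose first marginal π₁♯γ is absolutely continuous with respect to μ, and assume γ is concentrated on a σ-compact set Γ ⊆ X × X (γ(Γ) = 1). For y ∈ X and r > 0 set Γ⁻¹(B(y,r)) := π₁(Γ ∩ (X × B(y,r))). Then each set Γ⁻¹(B(y,r)) is σ-compact (in particular Borel), and γ is concentrated on a set Γ' ⊆ Γ such that for every (x,y) ∈ Γ' and every r > 0, x is a Lebesgue density point of Γ⁻¹(B(y,r)): μ(Γ⁻¹(B(y,r)) ∩ B(x,δ))/μ(B(x,δ))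 → 1 as δ → 0⁺. -/
open MeasureTheory Filter Metric Set
open scoped ENNReal NNReal

/-- A σ-compact set intersected with an open set is σ-compact in a pseudometric space. -/
lemma isSigmaCompact_inter_isOpen {Y : Type*} [PseudoMetricSpace Y] {s U : Set Y}
    (hs : IsSigmaCompact s) (hU : IsOpen U) : IsSigmaCompact (s ∩ U) := by
  obtain ⟨K, hK, rfl⟩ := hs
  rcases eq_empty_or_nonempty Uᶜ with hUc | hUc
  · have : U = univ := by simpa [compl_empty_iff] using hUc
    simpa [this] using isSigmaCompact_iUnion K (fun n => (hK n).isSigmaCompact)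
  have hUcc : IsClosed Uᶜ := hU.isClosed_compl
  set F : ℕ → Set Y := fun n => {x | 1 / (n + 1 : ℝ) ≤ infDist x Uᶜ} with hF
  have hFc : ∀ n, IsClosed (F n) :=
    fun n => isClosed_le continuous_const (continuous_infDist_pt _)
  have hFU : ⋃ n, F n = U := by
    ext x
    simp only [mem_iUnion, hF, mem_setOf_eq]
    constructor
    · rintro ⟨n, hn⟩
      by_contra hx
      have : infDist x Uᶜ = 0 := infDist_zero_of_mem (by simpa using hx)
      rw [this] at hn
      have : (0:ℝ) < 1 / (n + 1 : ℝ) := by positivity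
      linarith
    · intro hx
      have hpos : 0 < infDist x Uᶜ :=
        (hUcc.notMem_iff_infDist_pos hUc).mp (by simpa using hx)
      obtain ⟨n, hn⟩ := exists_nat_one_div_lt hpos
      exact ⟨n, hn.le⟩
  have : (⋃ n, K n) ∩ U = ⋃ p : ℕ × ℕ, K p.1 ∩ F p.2 := by
    rw [← hFU]
    ext x
    simp only [mem_inter_iff, mem_iUnion]
    constructor
    · rintro ⟨⟨n, hn⟩, m, hm⟩; exact ⟨⟨n, m⟩, hn, hm⟩
    · rintro ⟨⟨n, m⟩, hn, hm⟩; exact ⟨⟨n, hn⟩, ⟨m, hm⟩⟩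
  rw [this]
  exact isSigmaCompact_iUnion _ fun p => ((hK p.1).inter_right (hFc p.2)).isSigmaCompact

lemma IsSigmaCompact.measurableSet' {Y : Type*} [TopologicalSpace Y] [T2Space Y]
    [MeasurableSpace Y] [OpensMeasurableSpace Y] {s : Set Y} (hs : IsSigmaCompact s) :
    MeasurableSet s := by
  obtain ⟨K, hK, rfl⟩ := hs
  exact MeasurableSet.iUnion fun n => (hK n).measurableSet

/-- Lebesgue density theorem with open balls for uniformly locally doubling measures. -/
lemma ball_density {X : Type*} [MetricSpace X] [MeasurableSpace X] [BorelSpace X]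
    [SecondCountableTopology X] (μ : Measure X) [IsLocallyFiniteMeasure μ]
    [IsUnifLocDoublingMeasure μ] {S : Set X} (hS : MeasurableSet S) :
    ∀ᵐ x ∂μ.restrict S,
      Tendsto (fun δ : ℝ => μ (S ∩ ball x δ) / μ (ball x δ)) (nhdsWithin 0 (Set.Ioi 0)) (nhds 1) := by
  filter_upwards [IsUnifLocDoublingMeasure.ae_tendsto_measure_inter_div μ S 1] with x hx
  set C : ℝ≥0∞ := (IsUnifLocDoublingMeasure.scalingConstantOf μ 2 : ℝ≥0∞) with hC
  have hC_ne_top : C ≠ ∞ := ENNReal.coe_ne_top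
  -- density along closed balls centered at x
  have ratio : Tendsto (fun δ : ℝ => μ (S ∩ closedBall x δ) / μ (closedBall x δ))
      (nhdsWithin 0 (Set.Ioi 0)) (nhds 1) := by
    apply hx (fun _ => x) id tendsto_id
    filter_upwards [self_mem_nhdsWithin] with δ hδ
    simp only [id_eq, mem_closedBall, dist_self, one_mul]
    exact le_of_lt hδ
  -- eventually, closed balls have nonzero measure
  have hne : ∀ᶠ δ : ℝ in nhdsWithin 0 (Set.Ioi 0), μ (closedBall x δ) ≠ 0 := by
    filter_upwards [ratio.eventually_ne one_ne_zero] with δ hδ h0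
    apply hδ
    have : μ (S ∩ closedBall x δ) = 0 :=
      le_antisymm (h0 ▸ measure_mono inter_subset_right) zero_le
    simp [this, h0]
  -- half map
  have half_tendsto : Tendsto (fun δ : ℝ => δ / 2) (nhdsWithin 0 (Set.Ioi 0))
      (nhdsWithin 0 (Set.Ioi 0)) := by
    have h0 : Tendsto (fun δ : ℝ => δ / 2) (nhds 0) (nhds 0) := by
      simpa using (continuous_id.div_const (2:ℝ)).tendsto (0:ℝ)
    apply tendsto_nhdsWithin_of_tendsto_nhds_of_eventually_within _
      (h0.mono_left nhdsWithin_le_nhds)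
    filter_upwards [self_mem_nhdsWithin] with δ hδ
    exact half_pos (show (0:ℝ) < δ from hδ)
  have hne2 : ∀ᶠ δ : ℝ in nhdsWithin 0 (Set.Ioi 0), μ (closedBall x (δ / 2)) ≠ 0 :=
    half_tendsto.eventually hne
  -- eventually, closed balls have finite measure
  have hfin : ∀ᶠ δ : ℝ in nhdsWithin 0 (Set.Ioi 0), μ (closedBall x δ) ≠ ∞ := by
    obtain ⟨U, hU, hUfin⟩ := (μ.finiteAt_nhds x)
    obtain ⟨ε, hε, hball⟩ := Metric.nhds_basis_closedBall.mem_iff.mp hU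
    filter_upwards [Ioc_mem_nhdsGT_of_mem ⟨le_refl (0:ℝ), hε⟩] with δ hδ
    exact ne_of_lt (lt_of_le_of_lt (measure_mono ((closedBall_subset_closedBall hδ.2).trans hball))
      hUfin)
  -- doubling
  have hscale : ∀ᶠ δ : ℝ in nhdsWithin 0 (Set.Ioi 0),
      μ (closedBall x δ) ≤ C * μ (closedBall x (δ / 2)) := by
    have hR := IsUnifLocDoublingMeasure.scalingScaleOf_pos μ 2
    filter_upwards [Ioc_mem_nhdsGT_of_mem
      ⟨le_refl (0:ℝ), hR⟩] with δ hδ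
    have h2 : (2:ℝ) * (δ / 2) = δ := by ring
    have := IsUnifLocDoublingMeasure.measure_mul_le_scalingConstantOf_mul μ
      (x := x) (t := 2) (r := δ / 2) ⟨two_pos, le_refl (2:ℝ)⟩
      (by linarith [hδ.1, hδ.2] : δ / 2 ≤ IsUnifLocDoublingMeasure.scalingScaleOf μ 2)
    rwa [h2] at this
  -- v tends to 0
  set v : ℝ → ℝ≥0∞ := fun δ => μ (closedBall x δ \ S) / μ (closedBall x δ) with hv
  have hv0 : Tendsto v (nhdsWithin 0 (Set.Ioi 0)) (nhds 0) := by
    have hsub : Tendsto (fun δ : ℝ => 1 - μ (S ∩ closedBall x δ) / μ (closedBall x δ))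
        (nhdsWithin 0 (Set.Ioi 0)) (nhds 0) := by
      have := ((ENNReal.continuous_sub_left (a := 1) ENNReal.one_ne_top).tendsto 1).comp ratio
      simpa [Function.comp_def] using this
    apply hsub.congr'
    filter_upwards [hne, hfin] with δ h0 htop
    have hadd : μ (closedBall x δ ∩ S) + μ (closedBall x δ \ S) = μ (closedBall x δ) :=
      measure_inter_add_diff _ hS
    have hdiv : μ (S ∩ closedBall x δ) / μ (closedBall x δ) + v δ = 1 := by
      rw [hv, inter_comm, ENNReal.div_add_div_same, hadd, ENNReal.div_self h0 htop]
    have hfin1 : μ (S ∩ closedBall x δ) / μ (closedBall x δ) ≠ ∞ := by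
      intro h
      rw [h] at hdiv
      simp at hdiv
    exact (ENNReal.eq_sub_of_add_eq hfin1 (by rw [add_comm]; exact hdiv)).symm
  -- lower bound tends to 1
  have hL : Tendsto (fun δ : ℝ => 1 - C * v δ) (nhdsWithin 0 (Set.Ioi 0)) (nhds 1) := by
    have h1 : Tendsto (fun δ : ℝ => C * v δ) (nhdsWithin 0 (Set.Ioi 0)) (nhds 0) := by
      simpa using ENNReal.Tendsto.const_mul hv0 (Or.inr hC_ne_top)
    have := ((ENNReal.continuous_sub_left (a := 1) ENNReal.one_ne_top).tendsto 0).comp h1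
    simpa [Function.comp_def] using this
  -- squeeze
  refine tendsto_of_tendsto_of_tendsto_of_le_of_le' hL tendsto_const_nhds ?_ ?_
  · -- lower bound
    filter_upwards [hne2, hfin, hscale, self_mem_nhdsWithin] with δ h20 htop hsc (hδ : 0 < δ)
    have hb2 : closedBall x (δ / 2) ⊆ ball x δ := closedBall_subset_ball (by linarith)
    have hc0 : μ (ball x δ) ≠ 0 := fun h =>
      h20 (le_antisymm (h ▸ measure_mono hb2) zero_le)
    have hctop : μ (ball x δ) ≠ ∞ :=
      fun h => htop (top_le_iff.mp (h ▸ measure_mono ball_subset_closedBall))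
    -- 1 ≤ ratio + diff-ratio
    have hadd : μ (ball x δ ∩ S) + μ (ball x δ \ S) = μ (ball x δ) :=
      measure_inter_add_diff _ hS
    have hsum : μ (S ∩ ball x δ) / μ (ball x δ) + μ (ball x δ \ S) / μ (ball x δ) = 1 := by
      rw [inter_comm, ENNReal.div_add_div_same, hadd, ENNReal.div_self hc0 hctop]
    have step1 : (1:ℝ≥0∞) - μ (ball x δ \ S) / μ (ball x δ) ≤ μ (S ∩ ball x δ) / μ (ball x δ) :=
      tsub_le_iff_right.mpr (le_of_eq hsum.symm)
    refine le_trans (tsub_le_tsub_left ?_ 1) step1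
    -- μ (ball δ \ S)/μ(ball δ) ≤ C * v δ
    have hnum : μ (ball x δ \ S) ≤ μ (closedBall x δ \ S) :=
      measure_mono (diff_subset_diff_left ball_subset_closedBall)
    have hstep : μ (ball x δ \ S) / μ (ball x δ)
        ≤ μ (closedBall x δ \ S) / μ (closedBall x (δ / 2)) :=
      le_trans (ENNReal.div_le_div_right hnum _)
        (ENNReal.div_le_div_left (measure_mono hb2) _)
    refine hstep.trans ?_
    -- m / a ≤ C * (m / b)  with b ≤ C * a
    set m := μ (closedBall x δ \ S)
    set a := μ (closedBall x (δ / 2))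
    set b := μ (closedBall x δ)
    have hab : a ≤ b := measure_mono (closedBall_subset_closedBall (by linarith))
    have hb0 : b ≠ 0 := fun h => h20 (le_antisymm (h ▸ hab) zero_le)
    have ha_top : a ≠ ∞ := fun h => htop (top_le_iff.mp (h ▸ hab))
    have hkey : a⁻¹ ≤ C * b⁻¹ := by
      have h1 : b * a⁻¹ ≤ C := by
        calc b * a⁻¹ ≤ (C * a) * a⁻¹ := mul_le_mul_left hsc _
          _ = C * (a * a⁻¹) := by ring
          _ ≤ C * 1 := mul_le_mul_right (ENNReal.mul_inv_le_one a) _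
          _ = C := mul_one C
      calc a⁻¹ = (b⁻¹ * b) * a⁻¹ := by rw [ENNReal.inv_mul_cancel hb0 htop, one_mul]
        _ = b⁻¹ * (b * a⁻¹) := by ring
        _ ≤ b⁻¹ * C := mul_le_mul_right h1 _
        _ = C * b⁻¹ := mul_comm _ _
    calc m / a = m * a⁻¹ := ENNReal.div_eq_inv_mul.trans (mul_comm _ _)
      _ ≤ m * (C * b⁻¹) := mul_le_mul_right hkey _
      _ = C * (m * b⁻¹) := by ring
      _ = C * (m / b) := by rw [ENNReal.div_eq_inv_mul, mul_comm b⁻¹ m]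
  · -- upper bound
    filter_upwards with δ
    exact le_trans (ENNReal.div_le_div_right (measure_mono inter_subset_right) _)
      ENNReal.div_self_le_one

open TopologicalSpace in
theorem stmt_14 {X : Type*} [MetricSpace X] [TopologicalSpace.SeparableSpace X]
    [MeasurableSpace X] [BorelSpace X]
    (μ : Measure X) [IsLocallyFiniteMeasure μ] [IsUnifLocDoublingMeasure μ]
    (γ : Measure (X × X)) [IsProbabilityMeasure γ]
    (habs : γ.map Prod.fst ≪ μ)
    (Γ : Set (X × X)) (hΓσc : IsSigmaCompact Γ) (hΓ : γ Γ = 1) :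
    (∀ (y : X) (r : ℝ),
        IsSigmaCompact (Prod.fst '' (Γ ∩ Set.univ ×ˢ Metric.ball y r))) ∧
      ∃ Γ' : Set (X × X), Γ' ⊆ Γ ∧ MeasurableSet Γ' ∧ γ Γ' = 1 ∧
        ∀ p ∈ Γ', ∀ r > (0 : ℝ),
          Tendsto
            (fun δ : ℝ =>
              μ (Prod.fst '' (Γ ∩ Set.univ ×ˢ Metric.ball p.2 r) ∩ Metric.ball p.1 δ) /
                μ (Metric.ball p.1 δ))
            (nhdsWithin 0 (Set.Ioi 0)) (nhds 1) := by
  have _i : SecondCountableTopology X := UniformSpace.secondCountable_of_separable X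
  set S : X → ℝ → Set X := fun y r => Prod.fst '' (Γ ∩ Set.univ ×ˢ Metric.ball y r) with hSdef
  have part1 : ∀ (y : X) (r : ℝ), IsSigmaCompact (S y r) := fun y r =>
    (isSigmaCompact_inter_isOpen hΓσc (isOpen_univ.prod isOpen_ball)).image continuous_fst
  refine ⟨part1, ?_⟩
  have hSm : ∀ y r, MeasurableSet (S y r) := fun y r => (part1 y r).measurableSet'
  -- bad null sets
  have key : ∀ (y : X) (r : ℝ), ∃ N : Set X, MeasurableSet N ∧ γ (Prod.fst ⁻¹' N) = 0 ∧
      ∀ x ∈ S y r, x ∉ N →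
        Tendsto (fun δ : ℝ => μ (S y r ∩ Metric.ball x δ) / μ (Metric.ball x δ))
          (nhdsWithin 0 (Set.Ioi 0)) (nhds 1) := by
    intro y r
    have hae := ball_density μ (hSm y r)
    rw [ae_iff] at hae
    rw [Measure.restrict_apply' (hSm y r)] at hae
    set B := {a | ¬Tendsto (fun δ : ℝ => μ (S y r ∩ Metric.ball a δ) / μ (Metric.ball a δ))
      (nhdsWithin 0 (Set.Ioi 0)) (nhds 1)} ∩ S y r with hB
    refine ⟨toMeasurable μ B, measurableSet_toMeasurable _ _, ?_, ?_⟩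
    · have hμN : μ (toMeasurable μ B) = 0 := by rw [measure_toMeasurable]; exact hae
      have h2 : γ.map Prod.fst (toMeasurable μ B) = 0 := habs hμN
      rwa [Measure.map_apply measurable_fst (measurableSet_toMeasurable _ _)] at h2
    · intro x hxS hxN
      by_contra hnot
      exact hxN (subset_toMeasurable μ _ ⟨hnot, hxS⟩)
  choose N hNm hNγ hNd using key
  obtain ⟨D, hDc, hDd⟩ := TopologicalSpace.exists_countable_dense X
  have : Countable ↥D := hDc.to_subtype
  set Z : Set (X × X) := ⋃ (d : ↥D) (q : ℚ), Prod.fst ⁻¹' (N (d : X) (q : ℝ)) with hZ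
  have hZm : MeasurableSet Z :=
    MeasurableSet.iUnion fun d => MeasurableSet.iUnion fun q =>
      measurable_fst (hNm (d : X) (q : ℝ))
  have hZ0 : γ Z = 0 :=
    measure_iUnion_null fun d => measure_iUnion_null fun q => hNγ _ _
  refine ⟨Γ \ Z, diff_subset, hΓσc.measurableSet'.diff hZm, ?_, ?_⟩
  · rw [measure_diff_null hZ0]; exact hΓ
  · rintro ⟨x, y₀⟩ ⟨hpΓ, hpZ⟩ r hr
    -- choose a rational radius ball from the dense set
    obtain ⟨d, hdD, hd⟩ := hDd.exists_dist_lt y₀ (by linarith : (0:ℝ) < r / 4)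
    obtain ⟨q, hq1, hq2⟩ := exists_rat_btwn (by linarith : r / 4 < r / 2)
    have hy₀ : y₀ ∈ Metric.ball d (q : ℝ) := mem_ball.mpr (lt_trans hd hq1)
    have hsub : Metric.ball d (q : ℝ) ⊆ Metric.ball y₀ r := by
      intro z hz
      rw [mem_ball] at hz ⊢
      have h1 : dist z y₀ ≤ dist z d + dist d y₀ := dist_triangle _ _ _
      have h2 : dist d y₀ < r / 4 := by rw [dist_comm]; exact hd
      linarith
    have hxS : x ∈ S d (q : ℝ) := ⟨(x, y₀), ⟨hpΓ, ⟨trivial, hy₀⟩⟩, rfl⟩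
    have hxN : x ∉ N (d : X) (q : ℝ) := by
      intro hx
      exact hpZ (mem_iUnion.mpr ⟨⟨d, hdD⟩, mem_iUnion.mpr ⟨q, hx⟩⟩)
    have hdens := hNd d (q : ℝ) x hxS hxN
    -- squeeze
    have hST : S d (q : ℝ) ⊆ S y₀ r :=
      Set.image_mono (Set.inter_subset_inter_right _ (Set.prod_mono_right hsub))
    refine tendsto_of_tendsto_of_tendsto_of_le_of_le hdens tendsto_const_nhds ?_ ?_
    · intro δ
      exact ENNReal.div_le_div_right
        (measure_mono (Set.inter_subset_inter_left _ hST)) _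
    · intro δ
      exact le_trans (ENNReal.div_le_div_right (measure_mono inter_subset_right) _)
        ENNReal.div_self_le_one
end

section
/- Let X be a separable, locally compact metric space in which every open set is σ-compact. Let (γ_k) be a sequence of Borel probability measures on X × X converging weakly to a Borel probability measure γ, and assume the first marginals agree: π₁♯γ_k = π₁♯γ for every k. Then for every Borel set G ⊆ X, the restrictions γ_k⌊(G × X) converge weakly to γ⌊(G × X) as finite measures, i.e., ∫ φ d(γ_k⌊(G × X)) → ∫ φ d(γ⌊(G × X)) for every bounded continuous φ : X × X → ℝ. -/
open MeasureTheory Filter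

theorem stmt_17 {X : Type*} [MetricSpace X] [TopologicalSpace.SeparableSpace X]
    [LocallyCompactSpace X] [MeasurableSpace X] [BorelSpace X]
    (hσc : ∀ U : Set X, IsOpen U → IsSigmaCompact U)
    (γ : ℕ → Measure (X × X)) (γlim : Measure (X × X))
    (hprob : ∀ k, IsProbabilityMeasure (γ k)) [IsProbabilityMeasure γlim]
    (hconv : ∀ f : BoundedContinuousFunction (X × X) ℝ,
      Tendsto (fun k => ∫ p, f p ∂(γ k)) atTop (nhds (∫ p, f p ∂γlim)))
    (hmarg : ∀ k, (γ k).map Prod.fst = γlim.map Prod.fst) :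
    ∀ G : Set X, MeasurableSet G →
      ∀ φ : BoundedContinuousFunction (X × X) ℝ,
        Tendsto (fun k => ∫ p, φ p ∂((γ k).restrict (G ×ˢ Set.univ)))
          atTop (nhds (∫ p, φ p ∂(γlim.restrict (G ×ˢ Set.univ)))) := by
  intro G hG φ
  haveI hsc : SigmaCompactSpace X := isSigmaCompact_univ_iff.mp (hσc _ isOpen_univ)
  set μ : Measure X := γlim.map Prod.fst with hμdef
  haveI : IsProbabilityMeasure μ := Measure.isProbabilityMeasure_map measurable_fst.aemeasurable
  rw [Metric.tendsto_nhds]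
  intro ε hε
  set M : ℝ := ‖φ‖ with hM
  have hM0 : 0 ≤ M := norm_nonneg φ
  set δ : ℝ := ε / (4 * (M + 1)) with hδdef
  have hδ : 0 < δ := by positivity
  have hη : (ENNReal.ofReal δ) / 2 ≠ 0 := by
    simp only [ne_eq, ENNReal.div_eq_zero_iff, ENNReal.ofReal_eq_zero, ENNReal.ofNat_ne_top,
      or_false, not_le]
    exact hδ
  obtain ⟨K, hKG, hK, hμGK⟩ := hG.exists_isCompact_lt_add (μ := μ) (measure_ne_top μ G) hη
  obtain ⟨U, hGU, hUopen, hμUG⟩ := G.exists_isOpen_lt_add (μ := μ) (measure_ne_top μ G) hη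
  have hKU : K ⊆ U := hKG.trans hGU
  have hμUK : μ (U \ K) < ENNReal.ofReal δ := by
    have h1 : μ (U \ G) < ENNReal.ofReal δ / 2 :=
      measure_diff_lt_of_lt_add hG.nullMeasurableSet hGU (measure_ne_top μ G) hμUG
    have h2 : μ (G \ K) < ENNReal.ofReal δ / 2 :=
      measure_diff_lt_of_lt_add hK.isClosed.measurableSet.nullMeasurableSet hKG
        (measure_ne_top μ K) hμGK
    calc μ (U \ K) ≤ μ ((U \ G) ∪ (G \ K)) := by
          apply measure_mono
          intro x hx
          by_cases h : x ∈ G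
          · exact Or.inr ⟨h, hx.2⟩
          · exact Or.inl ⟨hx.1, h⟩
      _ ≤ μ (U \ G) + μ (G \ K) := measure_union_le _ _
      _ < ENNReal.ofReal δ / 2 + ENNReal.ofReal δ / 2 := ENNReal.add_lt_add h1 h2
      _ = ENNReal.ofReal δ := ENNReal.add_halves _
  set t : ℝ := (μ (U \ K)).toReal with htdef
  have ht0 : 0 ≤ t := ENNReal.toReal_nonneg
  have ht : t < δ := by
    have := ENNReal.toReal_lt_toReal (measure_ne_top μ _) ENNReal.ofReal_ne_top |>.mpr hμUK
    rwa [ENNReal.toReal_ofReal hδ.le] at this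
  obtain ⟨χ, hχK, hχUc, _hχsupp, hχ01⟩ :=
    exists_continuous_one_zero_of_isCompact hK hUopen.isClosed_compl
      (Set.disjoint_left.mpr fun x hxK hxU => hxU (hKU hxK))
  set χb : BoundedContinuousFunction X ℝ :=
    BoundedContinuousFunction.ofNormedAddCommGroup χ χ.continuous 1
      (fun x => by rw [Real.norm_eq_abs, abs_of_nonneg (hχ01 x).1]; exact (hχ01 x).2)
    with hχb
  set ψ : BoundedContinuousFunction (X × X) ℝ :=
    χb.compContinuous ⟨Prod.fst, continuous_fst⟩ * φ with hψdef
  have hψ : ∀ p : X × X, ψ p = χ p.1 * φ p := fun p => rfl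
  set h : X → ℝ := fun x => |G.indicator (fun _ => (1 : ℝ)) x - χ x| with hhdef
  have h_meas : Measurable h :=
    ((measurable_const.indicator hG).sub χ.continuous.measurable).abs
  have h_nonneg : ∀ x, 0 ≤ h x := fun x => abs_nonneg _
  have h_le_ind : ∀ x, h x ≤ Set.indicator (U \ K) (fun _ => (1 : ℝ)) x := by
    intro x
    by_cases hxK : x ∈ K
    · have : h x = 0 := by
        simp [hhdef, hχK hxK, Set.indicator_of_mem (hKG hxK)]
      rw [this]
      exact Set.indicator_nonneg (fun _ _ => zero_le_one) x
    by_cases hxU : x ∈ U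
    · have hxUK : x ∈ U \ K := ⟨hxU, hxK⟩
      rw [Set.indicator_of_mem hxUK]
      have ha : G.indicator (fun _ => (1 : ℝ)) x ∈ Set.Icc (0 : ℝ) 1 := by
        by_cases hx : x ∈ G <;> simp [hx]
      have hb := hχ01 x
      rw [hhdef]
      rw [abs_sub_le_iff]
      constructor <;> [linarith [ha.2, hb.1]; linarith [ha.1, hb.2]]
    · have : h x = 0 := by
        have hxG : x ∉ G := fun hxG => hxU (hGU hxG)
        have : χ x = 0 := hχUc hxU
        simp [hhdef, this, Set.indicator_of_notMem hxG]
      rw [this]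
      exact Set.indicator_nonneg (fun _ _ => zero_le_one) x
  have h_le_one : ∀ x, h x ≤ 1 := by
    intro x
    refine (h_le_ind x).trans ?_
    by_cases hx : x ∈ U \ K <;> simp [hx]
  have h_int : Integrable h μ := by
    refine Integrable.mono' (integrable_const (1 : ℝ)) h_meas.aestronglyMeasurable ?_
    exact Filter.Eventually.of_forall fun x => by
      rw [Real.norm_eq_abs, abs_of_nonneg (h_nonneg x)]; exact h_le_one x
  have h_int_le : ∫ x, h x ∂μ ≤ t := by
    have hmeasUK : MeasurableSet (U \ K) :=
      hUopen.measurableSet.diff hK.isClosed.measurableSet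
    calc ∫ x, h x ∂μ ≤ ∫ x, Set.indicator (U \ K) (fun _ => (1 : ℝ)) x ∂μ :=
          integral_mono h_int ((integrable_const (1 : ℝ)).indicator hmeasUK) h_le_ind
      _ = t := by rw [integral_indicator_const _ hmeasUK]; simp [htdef, Measure.real]
  -- key estimate
  have key : ∀ ν : Measure (X × X), IsProbabilityMeasure ν → ν.map Prod.fst = μ →
      |(∫ p, φ p ∂ν.restrict (G ×ˢ Set.univ)) - ∫ p, ψ p ∂ν| ≤ M * t := by
    intro ν hν hmap
    haveI := hν
    have hmeas_s : MeasurableSet (G ×ˢ (Set.univ : Set X)) := hG.prod MeasurableSet.univ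
    have hind_int : Integrable ((G ×ˢ (Set.univ : Set X)).indicator fun p => φ p) ν :=
      (φ.integrable ν).indicator hmeas_s
    have hMh_int : Integrable (fun p : X × X => M * h p.1) ν := by
      refine Integrable.mono' (integrable_const M) ?_ ?_
      · exact (h_meas.comp measurable_fst).aestronglyMeasurable.const_smul M
      · exact Filter.Eventually.of_forall fun p => by
          rw [Real.norm_eq_abs, abs_of_nonneg (mul_nonneg hM0 (h_nonneg _))]
          calc M * h p.1 ≤ M * 1 := mul_le_mul_of_nonneg_left (h_le_one _) hM0
            _ = M := mul_one M
    have hptwise : ∀ p : X × X,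
        ‖(G ×ˢ (Set.univ : Set X)).indicator (fun q => φ q) p - ψ p‖ ≤ M * h p.1 := by
      intro p
      have hind : (G ×ˢ (Set.univ : Set X)).indicator (fun q => φ q) p
          = G.indicator (fun _ => (1 : ℝ)) p.1 * φ p := by
        by_cases hp : p.1 ∈ G
        · rw [Set.indicator_of_mem (by exact ⟨hp, Set.mem_univ _⟩),
            Set.indicator_of_mem hp, one_mul]
        · rw [Set.indicator_of_notMem (fun hmem => hp hmem.1),
            Set.indicator_of_notMem hp, zero_mul]
      rw [hind, hψ, ← sub_mul, Real.norm_eq_abs, abs_mul]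
      calc |G.indicator (fun _ => (1 : ℝ)) p.1 - χ p.1| * |φ p|
          ≤ h p.1 * M := by
            apply mul_le_mul_of_nonneg_left _ (h_nonneg _)
            rw [← Real.norm_eq_abs]
            exact φ.norm_coe_le_norm p
        _ = M * h p.1 := mul_comm _ _
    have e1 : (∫ p, φ p ∂ν.restrict (G ×ˢ Set.univ))
        = ∫ p, (G ×ˢ (Set.univ : Set X)).indicator (fun q => φ q) p ∂ν :=
      (integral_indicator hmeas_s).symm
    rw [e1, ← integral_sub hind_int (ψ.integrable ν)]
    calc |∫ p, ((G ×ˢ (Set.univ : Set X)).indicator (fun q => φ q) p - ψ p) ∂ν|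
        ≤ ∫ p, ‖(G ×ˢ (Set.univ : Set X)).indicator (fun q => φ q) p - ψ p‖ ∂ν := by
          rw [← Real.norm_eq_abs]
          exact norm_integral_le_integral_norm _
      _ ≤ ∫ p, M * h p.1 ∂ν :=
          integral_mono (hind_int.sub (ψ.integrable ν)).norm hMh_int hptwise
      _ = M * ∫ p, h p.1 ∂ν := integral_const_mul M _
      _ = M * ∫ x, h x ∂μ := by
          rw [← hmap, integral_map measurable_fst.aemeasurable h_meas.aestronglyMeasurable]
      _ ≤ M * t := mul_le_mul_of_nonneg_left h_int_le hM0
  have hMt : M * t < ε / 4 := by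
    have hq : (M + 1) * δ = ε / 4 := by
      rw [hδdef]; field_simp
    nlinarith
  have hψconv := hconv ψ
  rw [Metric.tendsto_nhds] at hψconv
  filter_upwards [hψconv (ε / 4) (by positivity)] with k hk
  have h1 : |(∫ p, φ p ∂(γ k).restrict (G ×ˢ Set.univ)) - ∫ p, ψ p ∂(γ k)| ≤ M * t :=
    key (γ k) (hprob k) (hmarg k)
  have h2 : |(∫ p, φ p ∂γlim.restrict (G ×ˢ Set.univ)) - ∫ p, ψ p ∂γlim| ≤ M * t :=
    key γlim inferInstance rfl
  rw [Real.dist_eq] at hk ⊢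
  calc |(∫ p, φ p ∂(γ k).restrict (G ×ˢ Set.univ))
        - ∫ p, φ p ∂γlim.restrict (G ×ˢ Set.univ)|
      ≤ |(∫ p, φ p ∂(γ k).restrict (G ×ˢ Set.univ)) - ∫ p, ψ p ∂(γ k)|
        + |(∫ p, ψ p ∂(γ k)) - ∫ p, φ p ∂γlim.restrict (G ×ˢ Set.univ)| := abs_sub_le _ _ _
    _ ≤ |(∫ p, φ p ∂(γ k).restrict (G ×ˢ Set.univ)) - ∫ p, ψ p ∂(γ k)|
        + (|(∫ p, ψ p ∂(γ k)) - ∫ p, ψ p ∂γlim|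
          + |(∫ p, ψ p ∂γlim) - ∫ p, φ p ∂γlim.restrict (G ×ˢ Set.univ)|) := by
          gcongr; exact abs_sub_le _ _ _
    _ < ε := by
        rw [abs_sub_comm (∫ p, ψ p ∂γlim)] at *
        linarith
end
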